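/- arXiv:math/0003111 — 4 statements merged into one kernel-verified Lean document; each statement's English description precedes it below -/
import Mathlib

section
/- Let E and F be real Banach spaces with E ≠ {0}, and let n ≥ m ≥ 0 be integers. Then the space P(^mE,F) is isomorphic to a complemented subspace of P(^nE,F). -/
noncomputable section

open Metric Filter Topology
open scoped ENNReal NNReal

namespace PPV

/-- The closed unit ball of `E`, as a set. -/
abbrev Ball (E : Type*) [NormedAddCommGroup E] : Set E := Metric.closedBall (0 : E) 1

/-- A continuous multilinear map is symmetric. -/
def IsSymm {E F : Type*} [NormedAddCommGroup E] [NormedSpace ℝ E]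
    [NormedAddCommGroup F] [NormedSpace ℝ F] {k : ℕ}
    (A : ContinuousMultilinearMap ℝ (fun _ : Fin k => E) F) : Prop :=
  ∀ (σ : Equiv.Perm (Fin k)) (v : Fin k → E), (A fun i => v (σ i)) = A v

/-- `A` is the (symmetric) continuous multilinear map associated to the continuous
`k`-homogeneous polynomial represented by `f`, a bounded continuous function on the
closed unit ball of `E` (a continuous `k`-homogeneous polynomial is determined by
its restriction to the unit ball, and its norm is the sup norm there). -/
def Represents {E F : Type*} [NormedAddCommGroup E] [NormedSpace ℝ E]
    [NormedAddCommGroup F] [NormedSpace ℝ F] {k : ℕ}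
    (A : ContinuousMultilinearMap ℝ (fun _ : Fin k => E) F)
    (f : BoundedContinuousFunction (Ball E) F) : Prop :=
  IsSymm A ∧ ∀ y : Ball E, f y = A fun _ => (y : E)

/-- The space `P(^kE,F)` of continuous `k`-homogeneous polynomials from `E` to `F`,
realized (isometrically, via restriction to the unit ball) as a submodule of the space
of bounded continuous functions on the closed unit ball of `E`; the induced norm is
`‖P‖ = sup_{‖x‖ ≤ 1} ‖P x‖`. -/
def polySet (k : ℕ) (E F : Type*) [NormedAddCommGroup E] [NormedSpace ℝ E]
    [NormedAddCommGroup F] [NormedSpace ℝ F] :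
    Submodule ℝ (BoundedContinuousFunction (Ball E) F) where
  carrier := {f | ∃ A : ContinuousMultilinearMap ℝ (fun _ : Fin k => E) F, Represents A f}
  add_mem' := by
    rintro f g ⟨A, hA, hAf⟩ ⟨B, hB, hBf⟩
    exact ⟨A + B, fun σ v => by simp [hA σ v, hB σ v], fun y => by simp [hAf y, hBf y]⟩
  zero_mem' := ⟨0, fun σ v => rfl, fun y => by simp⟩
  smul_mem' := by
    rintro c f ⟨A, hA, hAf⟩
    exact ⟨c • A, fun σ v => by simp [hA σ v], fun y => by simp [hAf y]⟩

/-- A map `P : E → F` is continuous from the weak topology of `E` to the norm topology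
of `F` on bounded subsets of `E`. -/
def WeakContOnBounded (E F : Type*) [NormedAddCommGroup E] [NormedSpace ℝ E]
    [NormedAddCommGroup F] [NormedSpace ℝ F] (P : E → F) : Prop :=
  ∀ S : Set E, Bornology.IsBounded S →
    ContinuousOn (fun x : WeakSpace ℝ E => P ((toWeakSpace ℝ E).symm x))
      (toWeakSpace ℝ E '' S)

/-- The subspace `P_wb(^kE,F)` of `P(^kE,F)` consisting of the polynomials which are
weak-to-norm continuous on bounded sets. -/
def polyWbSet (k : ℕ) (E F : Type*) [NormedAddCommGroup E] [NormedSpace ℝ E]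
    [NormedAddCommGroup F] [NormedSpace ℝ F] :
    Submodule ℝ (BoundedContinuousFunction (Ball E) F) where
  carrier := {f | ∃ A : ContinuousMultilinearMap ℝ (fun _ : Fin k => E) F,
    Represents A f ∧ WeakContOnBounded E F (fun x => A fun _ => x)}
  add_mem' := by
    rintro f g ⟨A, ⟨hA, hAf⟩, hAw⟩ ⟨B, ⟨hB, hBf⟩, hBw⟩
    refine ⟨A + B, ⟨fun σ v => by simp [hA σ v, hB σ v], fun y => by simp [hAf y, hBf y]⟩,
      fun S hS => ?_⟩
    have := (hAw S hS).add (hBw S hS)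
    exact this
  zero_mem' := ⟨0, ⟨fun σ v => rfl, fun y => by simp⟩, fun S hS => by
    simpa using continuousOn_const (c := (0 : F))⟩
  smul_mem' := by
    rintro c f ⟨A, ⟨hA, hAf⟩, hAw⟩
    refine ⟨c • A, ⟨fun σ v => by simp [hA σ v], fun y => by simp [hAf y]⟩, fun S hS => ?_⟩
    have := (hAw S hS).const_smul c
    exact this

/-- A Banach space `Y` contains a copy of a Banach space `X`: there is a linear
homeomorphic embedding of `X` into `Y`. -/
def ContainsCopy (X Y : Type*) [NormedAddCommGroup X] [NormedSpace ℝ X]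
    [NormedAddCommGroup Y] [NormedSpace ℝ Y] : Prop :=
  ∃ f : X →L[ℝ] Y, ∃ c : ℝ, 0 < c ∧ ∀ x, c * ‖x‖ ≤ ‖f x‖

/-- A Banach space `Y` contains a complemented copy of a Banach space `X`: there is a
linear homeomorphic embedding of `X` into `Y` whose image is the range of a bounded
linear projection on `Y`. -/
def ContainsComplCopy (X Y : Type*) [NormedAddCommGroup X] [NormedSpace ℝ X]
    [NormedAddCommGroup Y] [NormedSpace ℝ Y] : Prop :=
  ∃ f : X →L[ℝ] Y, (∃ c : ℝ, 0 < c ∧ ∀ x, c * ‖x‖ ≤ ‖f x‖) ∧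
    ∃ π : Y →L[ℝ] Y, (∀ y, π y ∈ Set.range f) ∧ ∀ y ∈ Set.range f, π y = y

/-- The Banach space `ℓ∞` of bounded real sequences with the sup norm. -/
abbrev Linf : Type := lp (fun _ : ℕ => ℝ) ⊤

/-- The Banach space `ℓ₁` of absolutely summable real sequences. -/
abbrev LOne : Type := lp (fun _ : ℕ => ℝ) 1

/-- `c₀`, the subspace of `ℓ∞` of sequences converging to `0`. -/
def c0Set : Submodule ℝ Linf where
  carrier := {ξ | Tendsto (fun n => ξ n) atTop (nhds (0 : ℝ))}
  add_mem' := by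
    intro f g hf hg
    have h0 := hf.add hg
    rw [add_zero] at h0
    show Tendsto (fun n => (f + g) n) atTop (nhds (0 : ℝ))
    refine h0.congr fun n => ?_
    simp [lp.coeFn_add]
  zero_mem' := by
    show Tendsto (fun n => (0 : Linf) n) atTop (nhds (0 : ℝ))
    have h0 : Tendsto (fun _ : ℕ => (0 : ℝ)) atTop (nhds (0 : ℝ)) := tendsto_const_nhds
    refine h0.congr fun n => ?_
    simp [lp.coeFn_zero]
  smul_mem' := by
    intro c f hf
    have h0 := hf.const_mul c
    rw [mul_zero] at h0
    show Tendsto (fun n => (c • f) n) atTop (nhds (0 : ℝ))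
    refine h0.congr fun n => ?_
    simp [lp.coeFn_smul]

/-- A series `∑ xₙ` in a Banach space is weakly unconditionally Cauchy. -/
def WuC {X : Type*} [NormedAddCommGroup X] [NormedSpace ℝ X] (x : ℕ → X) : Prop :=
  ∀ φ : X →L[ℝ] ℝ, Summable fun n => |φ (x n)|

/-- A subset of `F` is relatively weakly compact: its closure in the weak topology
is weakly compact. -/
def RelWeaklyCompact {F : Type*} [NormedAddCommGroup F] [NormedSpace ℝ F] (s : Set F) : Prop :=
  IsCompact (closure (toWeakSpace ℝ F '' s))

/-- A (not necessarily linear) map `P : E → F` is unconditionally converging if, for each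
w.u.C. series `∑ xₙ` in `E`, the sequence `(P (∑_{i<n} x i))ₙ` converges in `F`. -/
def UncondConv {E F : Type*} [NormedAddCommGroup E] [NormedSpace ℝ E]
    [NormedAddCommGroup F] [NormedSpace ℝ F] (P : E → F) : Prop :=
  ∀ x : ℕ → E, WuC x → ∃ y : F, Tendsto (fun n => P (∑ i ∈ Finset.range n, x i)) atTop (nhds y)

/-- A Banach space `E` has Pełczyński's property (V) if every unconditionally converging
(bounded linear) operator from `E` into any Banach space is weakly compact. -/
def PropertyV (E : Type*) [NormedAddCommGroup E] [NormedSpace ℝ E] : Prop :=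
  ∀ (F : Type*) [NormedAddCommGroup F] [NormedSpace ℝ F] [CompleteSpace F],
    ∀ T : E →L[ℝ] F, UncondConv (fun x => T x) →
      RelWeaklyCompact ((fun x => T x) '' Metric.closedBall (0 : E) 1)

/-- `E` has an unconditional finite dimensional expansion of the identity: a sequence
`(Aₙ)` of finite-rank bounded operators on `E` with `x = ∑ₙ Aₙ x` unconditionally for
every `x ∈ E` (unconditional convergence of the series is `HasSum`). -/
def HasUFDEI (E : Type*) [NormedAddCommGroup E] [NormedSpace ℝ E] : Prop :=
  ∃ A : ℕ → E →L[ℝ] E, (∀ n, FiniteDimensional ℝ (LinearMap.range (A n).toLinearMap)) ∧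
    ∀ x : E, HasSum (fun n => A n x) x

/-- An operator `C : E → P(^kE,F)` is symmetric: `(C x)^(y₁,…,y_k) = (C y₁)^(x,y₂,…,y_k)`,
where `(C z)^` is the symmetric `k`-linear map associated to `C z`.  (Equivalently:
replacing, in any slot, the argument `z` of the symmetric multilinear map associated to
`C x` by `x` and instead applying the multilinear map associated to `C z` gives the
same value.) -/
def IsSymmOp {E F : Type*} [NormedAddCommGroup E] [NormedSpace ℝ E]
    [NormedAddCommGroup F] [NormedSpace ℝ F] {k : ℕ}
    (C : E →L[ℝ] polySet k E F) : Prop :=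
  ∀ (x z : E) (A B : ContinuousMultilinearMap ℝ (fun _ : Fin k => E) F),
    Represents A (C x : BoundedContinuousFunction (Ball E) F) →
    Represents B (C z : BoundedContinuousFunction (Ball E) F) →
    ∀ (v : Fin k → E) (i : Fin k),
      A (Function.update v i z) = B (Function.update v i x)

/-- `P_wb(^kE,F)` is complemented in `P(^kE,F)`: there is a bounded linear projection
on `P(^kE,F)` whose range is `P_wb(^kE,F)`. -/
def WbComplemented (k : ℕ) (E F : Type*) [NormedAddCommGroup E] [NormedSpace ℝ E]
    [NormedAddCommGroup F] [NormedSpace ℝ F] : Prop :=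
  ∃ π : polySet k E F →L[ℝ] polySet k E F,
    (∀ f : polySet k E F, (π f : BoundedContinuousFunction (Ball E) F) ∈ polyWbSet k E F) ∧
    ∀ f : polySet k E F, (f : BoundedContinuousFunction (Ball E) F) ∈ polyWbSet k E F → π f = f

/-- `ℓ_p` for an extended-real exponent `p`. -/
abbrev Lp' (p : ℝ≥0∞) : Type := lp (fun _ : ℕ => ℝ) p

end PPV

namespace Stmts
open PPV Metric Filter Topology
open scoped ENNReal NNReal

section Helpers

open Finset in
lemma exists_perm_finset {k : ℕ} (S : Finset (Fin k)) :
    ∃ σ : Equiv.Perm (Fin k), ∀ i, σ i ∈ S ↔ (i : ℕ) < S.card := by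
  classical
  have hc : S.card ≤ k := by simpa using S.card_le_univ
  have e1 : {i : Fin k // (i : ℕ) < S.card} ≃ Fin S.card :=
    { toFun := fun i => ⟨i.1.1, i.2⟩
      invFun := fun j => ⟨⟨j.1, lt_of_lt_of_le j.2 hc⟩, j.2⟩
      left_inv := fun i => rfl
      right_inv := fun j => rfl }
  have h1 : Fintype.card {i : Fin k // (i : ℕ) < S.card} = Fintype.card {i : Fin k // i ∈ S} := by
    rw [Fintype.card_congr e1, Fintype.card_fin, Fintype.card_coe]
  have h2 : Fintype.card {i : Fin k // ¬ (i : ℕ) < S.card}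
      = Fintype.card {i : Fin k // ¬ i ∈ S} := by
    rw [Fintype.card_subtype_compl, Fintype.card_subtype_compl, h1]
  refine ⟨Equiv.subtypeCongr (Fintype.equivOfCardEq h1) (Fintype.equivOfCardEq h2),
    fun i => ?_⟩
  by_cases h : (i : ℕ) < S.card
  · have : Equiv.subtypeCongr (Fintype.equivOfCardEq h1) (Fintype.equivOfCardEq h2) i
        = ↑(Fintype.equivOfCardEq h1 ⟨i, h⟩) := by
      have hs : (Equiv.sumCompl fun x : Fin k => (x : ℕ) < S.card).symm i = Sum.inl ⟨i, h⟩ :=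
        Equiv.sumCompl_symm_apply_of_pos (p := fun x : Fin k => (x : ℕ) < S.card) h
      simp [Equiv.subtypeCongr, hs, Sum.map_inl, Equiv.sumCompl_apply_inl]
    rw [this]
    simpa [h] using (Fintype.equivOfCardEq h1 ⟨i, h⟩).2
  · have : Equiv.subtypeCongr (Fintype.equivOfCardEq h1) (Fintype.equivOfCardEq h2) i
        = ↑(Fintype.equivOfCardEq h2 ⟨i, h⟩) := by
      have hs : (Equiv.sumCompl fun x : Fin k => (x : ℕ) < S.card).symm i = Sum.inr ⟨i, h⟩ :=
        Equiv.sumCompl_symm_apply_of_neg (p := fun x : Fin k => (x : ℕ) < S.card) h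
      simp [Equiv.subtypeCongr, hs, Sum.map_inr, Equiv.sumCompl_apply_inr]
    rw [this]
    simpa [h] using (Fintype.equivOfCardEq h2 ⟨i, h⟩).2


variable {E F : Type*} [NormedAddCommGroup E] [NormedSpace ℝ E]
  [NormedAddCommGroup F] [NormedSpace ℝ F]

open Finset in
lemma symm_piecewise {k : ℕ} (A : ContinuousMultilinearMap ℝ (fun _ : Fin k => E) F)
    (hA : PPV.IsSymm A) (a b : E) (S : Finset (Fin k)) :
    A (S.piecewise (fun _ => a) (fun _ => b))
      = A (fun i => if (i : ℕ) < S.card then a else b) := by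
  classical
  obtain ⟨σ, hσ⟩ := exists_perm_finset S
  rw [← hA σ (S.piecewise (fun _ => a) (fun _ => b))]
  congr 1
  funext i
  by_cases h : (i : ℕ) < S.card
  · have hp : S.piecewise (fun _ => a) (fun _ => b) (σ i) = if σ i ∈ S then a else b := by
      simp [Finset.piecewise]
    rw [hp, if_congr (hσ i) rfl rfl]
  · have hp : S.piecewise (fun _ => a) (fun _ => b) (σ i) = if σ i ∈ S then a else b := by
      simp [Finset.piecewise]
    rw [hp, if_congr (hσ i) rfl rfl]

open Finset in
lemma binomial_diag {k : ℕ} (A : ContinuousMultilinearMap ℝ (fun _ : Fin k => E) F)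
    (hA : PPV.IsSymm A) (a b : E) (t : ℝ) :
    (A fun _ => t • a + b)
      = ∑ j ∈ range (k + 1), ((k.choose j : ℝ) * t ^ j) •
          A (fun i => if (i : ℕ) < j then a else b) := by
  classical
  have h0 : (fun _ : Fin k => t • a + b)
      = (fun _ : Fin k => t • a) + (fun _ : Fin k => b) := rfl
  rw [h0]
  have h1 : A ((fun _ : Fin k => t • a) + fun _ : Fin k => b)
      = ∑ s : Finset (Fin k), A (s.piecewise (fun _ => t • a) (fun _ => b)) :=
    A.toMultilinearMap.map_add_univ _ _
  rw [h1]
  have h2 : ∀ s : Finset (Fin k),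
      A (s.piecewise (fun _ => t • a) (fun _ => b))
        = t ^ s.card • A (fun i => if (i : ℕ) < s.card then a else b) := by
    intro s
    have e1 : s.piecewise (fun _ : Fin k => t • a) (fun _ => b)
        = s.piecewise (fun i => t • (s.piecewise (fun _ : Fin k => a) (fun _ => b)) i)
            (s.piecewise (fun _ : Fin k => a) (fun _ => b)) := by
      funext i
      by_cases h : i ∈ s <;> simp [Finset.piecewise, h]
    rw [e1]
    have := A.toMultilinearMap.map_piecewise_smul (fun _ => t)
      (s.piecewise (fun _ : Fin k => a) (fun _ => b)) s
    rw [show (A.toMultilinearMap) = ⇑A from rfl] at this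
    rw [this, prod_const, ← symm_piecewise A hA a b s]
  calc ∑ s : Finset (Fin k), A (s.piecewise (fun _ => t • a) (fun _ => b))
      = ∑ s ∈ (univ : Finset (Fin k)).powerset,
          t ^ s.card • A (fun i => if (i : ℕ) < s.card then a else b) := by
        rw [Finset.powerset_univ]
        exact Finset.sum_congr rfl (fun s _ => h2 s)
    _ = ∑ j ∈ range (k + 1), ((k.choose j : ℝ) * t ^ j) •
          A (fun i => if (i : ℕ) < j then a else b) := by
        rw [Finset.sum_powerset_apply_card
          (fun c => t ^ c • A (fun i => if (i : ℕ) < c then a else b))]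
        simp only [card_univ, Fintype.card_fin]
        refine Finset.sum_congr rfl (fun j _ => ?_)
        rw [← Nat.cast_smul_eq_nsmul ℝ, smul_smul]
lemma pow_neg_one_sub {c t : ℕ} (h : t ≤ c) :
    ((-1 : ℝ)) ^ (c - t) = (-1) ^ c * (-1) ^ t := by
  have h1 : ((-1 : ℝ)) ^ (c - t) * (-1) ^ t = (-1) ^ c := by
    rw [← pow_add, Nat.sub_add_cancel h]
  have h2 : ((-1 : ℝ) ^ t) * ((-1 : ℝ) ^ t) = 1 := by
    rw [← mul_pow]; norm_num
  calc ((-1 : ℝ)) ^ (c - t) = (-1) ^ (c - t) * ((-1) ^ t * (-1) ^ t) := by rw [h2, mul_one]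
    _ = ((-1) ^ (c - t) * (-1) ^ t) * (-1) ^ t := by ring
    _ = (-1) ^ c * (-1) ^ t := by rw [h1]

open Finset in
lemma superset_alternating_sum {k : ℕ} (R : Finset (Fin k)) :
    (∑ S : Finset (Fin k), if R ⊆ S then ((-1 : ℝ) ^ (k - S.card)) else 0)
      = if R = univ then 1 else 0 := by
  classical
  have hk : (univ : Finset (Fin k)).card = k := by simp
  have hstep : (∑ S : Finset (Fin k), if R ⊆ S then ((-1 : ℝ) ^ (k - S.card)) else 0)
      = ∑ T ∈ Rᶜ.powerset, ((-1 : ℝ) ^ (k - (R.card + T.card))) := by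
    rw [← Finset.sum_filter]
    refine Finset.sum_nbij' (i := fun S => S \ R) (j := fun T => R ∪ T) ?_ ?_ ?_ ?_ ?_
    · intro S hS
      rw [Finset.mem_filter] at hS
      rw [Finset.mem_powerset]
      intro x hx
      rw [Finset.mem_sdiff] at hx
      simp [hx.2]
    · intro T hT
      rw [Finset.mem_powerset] at hT
      refine Finset.mem_filter.2 ⟨mem_univ _, Finset.subset_union_left⟩
    · intro S hS
      rw [Finset.mem_filter] at hS
      exact Finset.union_sdiff_of_subset hS.2
    · intro T hT
      rw [Finset.mem_powerset] at hT
      apply Finset.union_sdiff_cancel_left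
      rw [Finset.disjoint_left]
      intro x hxR hxT
      have := hT hxT
      simp at this
      exact this hxR
    · intro S hS
      rw [Finset.mem_filter] at hS
      have hle := Finset.card_le_card hS.2
      have hcard : S.card = R.card + (S \ R).card := by
        rw [Finset.card_sdiff_of_subset hS.2]
        omega
      show ((-1 : ℝ)) ^ (k - S.card) = (-1) ^ (k - (R.card + (S \ R).card))
      rw [← hcard]
  rw [hstep]
  have hRc : ∀ T ∈ Rᶜ.powerset, k - (R.card + T.card) = Rᶜ.card - T.card := by
    intro T hT
    have : Rᶜ.card = k - R.card := by rw [Finset.card_compl, Fintype.card_fin]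
    omega
  by_cases hR : R = univ
  · subst hR
    simp
  · have hRc0 : Rᶜ ≠ ∅ := fun h => hR (Finset.compl_eq_empty_iff R |>.1 h)
    rw [if_neg hR]
    calc ∑ T ∈ Rᶜ.powerset, ((-1 : ℝ) ^ (k - (R.card + T.card)))
        = ∑ T ∈ Rᶜ.powerset, ((-1 : ℝ) ^ (Rᶜ.card) * (-1) ^ T.card) := by
          refine Finset.sum_congr rfl fun T hT => ?_
          rw [hRc T hT]
          exact pow_neg_one_sub (Finset.card_le_card (Finset.mem_powerset.1 hT))
      _ = ((-1 : ℝ) ^ (Rᶜ.card)) * ∑ T ∈ Rᶜ.powerset, ((-1 : ℝ) ^ T.card) := by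
          rw [Finset.mul_sum]
      _ = 0 := by
          have hz : (∑ T ∈ Rᶜ.powerset, ((-1 : ℤ) ^ T.card)) = 0 := by
            rw [Finset.sum_powerset_neg_one_pow_card, if_neg hRc0]
          have : (∑ T ∈ Rᶜ.powerset, ((-1 : ℝ) ^ T.card)) = 0 := by
            have := congrArg (fun z : ℤ => (z : ℝ)) hz
            push_cast at this
            exact this
          rw [this, mul_zero]
open Finset in
lemma polarization {k : ℕ} (A : ContinuousMultilinearMap ℝ (fun _ : Fin k => E) F)
    (hA : PPV.IsSymm A) (v : Fin k → E) :
    (k.factorial : ℝ) • A v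
      = ∑ S : Finset (Fin k), ((-1 : ℝ) ^ (k - S.card)) • A (fun _ => ∑ i ∈ S, v i) := by
  classical
  have hterm : ∀ S : Finset (Fin k), A (fun _ => ∑ i ∈ S, v i)
      = ∑ r ∈ Fintype.piFinset (fun _ : Fin k => S), A (fun i => v (r i)) :=
    fun S => A.toMultilinearMap.map_sum_finset (fun _ j => v j) (fun _ => S)
  have hterm2 : ∀ S : Finset (Fin k),
      (∑ r ∈ Fintype.piFinset (fun _ : Fin k => S), A (fun i => v (r i)))
      = ∑ r : Fin k → Fin k, if (∀ i, r i ∈ S) then A (fun i => v (r i)) else 0 := by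
    intro S
    rw [← Finset.sum_filter]
    refine Finset.sum_congr ?_ (fun _ _ => rfl)
    ext r
    simp [Fintype.mem_piFinset]
  symm
  calc ∑ S : Finset (Fin k), ((-1 : ℝ) ^ (k - S.card)) • A (fun _ => ∑ i ∈ S, v i)
      = ∑ S : Finset (Fin k), ∑ r : Fin k → Fin k,
          (if (∀ i, r i ∈ S) then ((-1 : ℝ) ^ (k - S.card)) else 0) • A (fun i => v (r i)) := by
        refine Finset.sum_congr rfl fun S _ => ?_
        rw [hterm S, hterm2 S, Finset.smul_sum]
        refine Finset.sum_congr rfl fun r _ => ?_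
        by_cases h : ∀ i, r i ∈ S <;> simp [h]
    _ = ∑ r : Fin k → Fin k, (∑ S : Finset (Fin k),
          if (∀ i, r i ∈ S) then ((-1 : ℝ) ^ (k - S.card)) else 0) • A (fun i => v (r i)) := by
        rw [Finset.sum_comm]
        exact Finset.sum_congr rfl fun r _ => (Finset.sum_smul).symm
    _ = ∑ r : Fin k → Fin k,
          (if Function.Surjective r then (1 : ℝ) else 0) • A (fun i => v (r i)) := by
        refine Finset.sum_congr rfl fun r _ => ?_
        congr 1
        have himg : ∀ S : Finset (Fin k), (∀ i, r i ∈ S) ↔ (Finset.image r univ ⊆ S) := by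
          intro S; rw [Finset.image_subset_iff]; simp
        calc ∑ S : Finset (Fin k), (if (∀ i, r i ∈ S) then ((-1 : ℝ) ^ (k - S.card)) else 0)
            = ∑ S : Finset (Fin k),
                (if (Finset.image r univ ⊆ S) then ((-1 : ℝ) ^ (k - S.card)) else 0) :=
              Finset.sum_congr rfl fun S _ => if_congr (himg S) rfl rfl
          _ = if Finset.image r univ = univ then 1 else 0 := superset_alternating_sum _
          _ = if Function.Surjective r then (1 : ℝ) else 0 := by
              refine if_congr ?_ rfl rfl
              constructor
              · intro h y
                have : y ∈ Finset.image r univ := by rw [h]; exact mem_univ y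
                simpa using this
              · intro h
                apply Finset.eq_univ_iff_forall.2
                intro y
                simpa using h y
    _ = ∑ r ∈ univ.filter (fun r : Fin k → Fin k => Function.Surjective r),
          A (fun i => v (r i)) := by
        rw [Finset.sum_filter]
        refine Finset.sum_congr rfl fun r _ => ?_
        by_cases h : Function.Surjective r <;> simp [h]
    _ = ∑ r ∈ univ.filter (fun r : Fin k → Fin k => Function.Surjective r), A v := by
        refine Finset.sum_congr rfl fun r hr => ?_
        rw [Finset.mem_filter] at hr
        have hb : Function.Bijective r := Finite.surjective_iff_bijective.1 hr.2
        exact hA (Equiv.ofBijective r hb) v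
    _ = (k.factorial : ℝ) • A v := by
        rw [Finset.sum_const]
        have e : Equiv.Perm (Fin k) ≃ {r : Fin k → Fin k // Function.Surjective r} :=
          { toFun := fun σ => ⟨σ, σ.surjective⟩
            invFun := fun r => Equiv.ofBijective r.1 (Finite.surjective_iff_bijective.1 r.2)
            left_inv := fun σ => Equiv.ext fun x => rfl
            right_inv := fun r => Subtype.ext rfl }
        have hcard : (univ.filter (fun r : Fin k → Fin k => Function.Surjective r)).card
            = k.factorial := by
          rw [← Fintype.card_subtype, ← Fintype.card_congr e, Fintype.card_perm,
            Fintype.card_fin]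
        rw [hcard, ← Nat.cast_smul_eq_nsmul ℝ]
lemma mem_ball_of_norm {z : E} (hz : ‖z‖ ≤ 1) : z ∈ PPV.Ball E := by
  simpa [PPV.Ball, mem_closedBall_zero_iff] using hz

lemma diag_scale {k : ℕ} (A : ContinuousMultilinearMap ℝ (fun _ : Fin k => E) F)
    (c : ℝ) (z : E) : (A fun _ => c • z) = c ^ k • A (fun _ => z) := by
  have := A.map_smul_univ (fun _ : Fin k => c) (fun _ => z)
  simpa using this

lemma diag_eq_of_ball {k : ℕ} (A B : ContinuousMultilinearMap ℝ (fun _ : Fin k => E) F)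
    (h : ∀ z : E, ‖z‖ ≤ 1 → (A fun _ => z) = B (fun _ => z)) (z : E) :
    (A fun _ => z) = B (fun _ => z) := by
  set c := max ‖z‖ 1 with hcdef
  have hc : 0 < c := lt_of_lt_of_le one_pos (le_max_right _ _)
  have hz : ‖c⁻¹ • z‖ ≤ 1 := by
    rw [norm_smul, norm_inv, Real.norm_eq_abs, abs_of_pos hc]
    have h1 : ‖z‖ ≤ c := le_max_left _ _
    calc c⁻¹ * ‖z‖ ≤ c⁻¹ * c := mul_le_mul_of_nonneg_left h1 (inv_nonneg.2 hc.le)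
      _ = 1 := inv_mul_cancel₀ hc.ne'
  have hrec : z = c • (c⁻¹ • z) := (smul_inv_smul₀ (ne_of_gt hc) z).symm
  calc (A fun _ => z) = A (fun _ => c • (c⁻¹ • z)) := by rw [← hrec]
    _ = c ^ k • A (fun _ => c⁻¹ • z) := diag_scale A c _
    _ = c ^ k • B (fun _ => c⁻¹ • z) := by rw [h _ hz]
    _ = B (fun _ => c • (c⁻¹ • z)) := (diag_scale B c _).symm
    _ = B (fun _ => z) := by rw [← hrec]

lemma represents_unique {k : ℕ} {A B : ContinuousMultilinearMap ℝ (fun _ : Fin k => E) F}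
    {f : BoundedContinuousFunction (PPV.Ball E) F}
    (hA : PPV.Represents A f) (hB : PPV.Represents B f) : A = B := by
  have hball : ∀ z : E, ‖z‖ ≤ 1 → (A fun _ => z) = B (fun _ => z) := by
    intro z hz
    rw [← hA.2 ⟨z, mem_ball_of_norm hz⟩, ← hB.2 ⟨z, mem_ball_of_norm hz⟩]
  have hdiag := diag_eq_of_ball A B hball
  ext v
  have h1 := polarization A hA.1 v
  have h2 := polarization B hB.1 v
  have heq : (k.factorial : ℝ) • A v = (k.factorial : ℝ) • B v := by
    rw [h1, h2]
    exact Finset.sum_congr rfl fun S _ => by rw [hdiag]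
  have hk : (k.factorial : ℝ) ≠ 0 := Nat.cast_ne_zero.2 (Nat.factorial_ne_zero k)
  exact smul_right_injective F hk heq

lemma represents_add {k : ℕ} {A B : ContinuousMultilinearMap ℝ (fun _ : Fin k => E) F}
    {f g : BoundedContinuousFunction (PPV.Ball E) F}
    (hA : PPV.Represents A f) (hB : PPV.Represents B g) :
    PPV.Represents (A + B) (f + g) :=
  ⟨fun σ v => by simp [hA.1 σ v, hB.1 σ v], fun y => by simp [hA.2 y, hB.2 y]⟩

lemma represents_smul {k : ℕ} (c : ℝ) {A : ContinuousMultilinearMap ℝ (fun _ : Fin k => E) F}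
    {f : BoundedContinuousFunction (PPV.Ball E) F} (hA : PPV.Represents A f) :
    PPV.Represents (c • A) (c • f) :=
  ⟨fun σ v => by simp [hA.1 σ v], fun y => by simp [hA.2 y]⟩

lemma mem_polySet_iff {k : ℕ} {f : BoundedContinuousFunction (PPV.Ball E) F} :
    f ∈ PPV.polySet k E F ↔ ∃ A : ContinuousMultilinearMap ℝ (fun _ : Fin k => E) F,
      PPV.Represents A f := Iff.rfl

def polyA {k : ℕ} (f : PPV.polySet k E F) : ContinuousMultilinearMap ℝ (fun _ : Fin k => E) F :=
  Classical.choose (mem_polySet_iff.mp f.2)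

lemma polyA_spec {k : ℕ} (f : PPV.polySet k E F) : PPV.Represents (polyA f) ↑f :=
  Classical.choose_spec (mem_polySet_iff.mp f.2)
open Finset in
lemma polyA_norm_bound {k : ℕ} (f : PPV.polySet k E F) (v : Fin k → E) :
    ‖polyA f v‖ ≤ ((k + 1 : ℝ) ^ k * 2 ^ k / k.factorial) * ‖(f : BoundedContinuousFunction (PPV.Ball E) F)‖
      * ∏ i, ‖v i‖ := by
  classical
  set A := polyA f with hAdef
  have hA := polyA_spec f
  by_cases h0 : ∃ i, v i = 0
  · obtain ⟨i, hi⟩ := h0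
    rw [A.map_coord_zero i hi, norm_zero]
    have : (∏ i, ‖v i‖) = 0 := Finset.prod_eq_zero (mem_univ i) (by rw [hi, norm_zero])
    rw [this, mul_zero]
  · push_neg at h0
    set w := fun i => ((k + 1 : ℝ) * ‖v i‖)⁻¹ • v i with hwdef
    have hki : (0:ℝ) < (k + 1 : ℝ) := by positivity
    have hvi : ∀ i, (0:ℝ) < ‖v i‖ := fun i => norm_pos_iff.2 (h0 i)
    have hw : ∀ i, ‖w i‖ = (k + 1 : ℝ)⁻¹ := by
      intro i
      rw [hwdef]
      simp only []
      rw [norm_smul, norm_inv, Real.norm_eq_abs, abs_of_pos (mul_pos hki (hvi i))]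
      rw [mul_inv]
      rw [mul_assoc, inv_mul_cancel₀ (hvi i).ne']
      rw [mul_one]
    -- bound on ‖A w‖ via polarization
    have hAw : (k.factorial : ℝ) * ‖A w‖ ≤ 2 ^ k * ‖(f : BoundedContinuousFunction (PPV.Ball E) F)‖ := by
      have hpol := polarization A hA.1 w
      have hnorm : ‖(k.factorial : ℝ) • A w‖
          ≤ ∑ S : Finset (Fin k), ‖A (fun _ => ∑ i ∈ S, w i)‖ := by
        rw [hpol]
        refine le_trans (norm_sum_le _ _) ?_
        refine Finset.sum_le_sum fun S _ => ?_
        rw [norm_smul]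
        have : ‖(-1 : ℝ) ^ (k - S.card)‖ = 1 := by
          rw [norm_pow]; simp
        rw [this, one_mul]
      have hterm : ∀ S : Finset (Fin k),
          ‖A (fun _ => ∑ i ∈ S, w i)‖ ≤ ‖(f : BoundedContinuousFunction (PPV.Ball E) F)‖ := by
        intro S
        have hpt : ‖∑ i ∈ S, w i‖ ≤ 1 := by
          refine le_trans (norm_sum_le _ _) ?_
          calc ∑ i ∈ S, ‖w i‖ = S.card * (k + 1 : ℝ)⁻¹ := by
                rw [Finset.sum_congr rfl (fun i _ => hw i), Finset.sum_const,
                  nsmul_eq_mul]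
            _ ≤ (k + 1 : ℝ) * (k + 1 : ℝ)⁻¹ := by
                refine mul_le_mul_of_nonneg_right ?_ (by positivity)
                have := S.card_le_univ
                simp only [card_univ, Fintype.card_fin] at this
                exact_mod_cast le_trans (Nat.cast_le.2 this) (by norm_num)
            _ = 1 := mul_inv_cancel₀ hki.ne'
        rw [← hA.2 ⟨_, mem_ball_of_norm hpt⟩]
        exact BoundedContinuousFunction.norm_coe_le_norm _ _
      have hcard : (∑ S : Finset (Fin k),
          ‖(f : BoundedContinuousFunction (PPV.Ball E) F)‖)
          = 2 ^ k * ‖(f : BoundedContinuousFunction (PPV.Ball E) F)‖ := by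
        rw [Finset.sum_const, nsmul_eq_mul]
        congr 1
        rw [Finset.card_univ, Fintype.card_finset, Fintype.card_fin]
        push_cast
        ring
      calc (k.factorial : ℝ) * ‖A w‖ = ‖(k.factorial : ℝ) • A w‖ := by
            rw [norm_smul, Real.norm_eq_abs, abs_of_pos (by positivity)]
        _ ≤ ∑ S : Finset (Fin k), ‖A (fun _ => ∑ i ∈ S, w i)‖ := hnorm
        _ ≤ ∑ S : Finset (Fin k), ‖(f : BoundedContinuousFunction (PPV.Ball E) F)‖ :=
            Finset.sum_le_sum fun S _ => hterm S
        _ = 2 ^ k * ‖(f : BoundedContinuousFunction (PPV.Ball E) F)‖ := hcard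
    have hvw : A v = (∏ i, ((k + 1 : ℝ) * ‖v i‖)) • A w := by
      have hv : v = fun i => ((k + 1 : ℝ) * ‖v i‖) • w i := by
        funext i
        rw [hwdef]
        simp only []
        rw [smul_inv_smul₀ (mul_pos hki (hvi i)).ne']
      conv_lhs => rw [hv]
      exact A.map_smul_univ _ _
    have hprod : (∏ i, ((k + 1 : ℝ) * ‖v i‖)) = (k + 1 : ℝ) ^ k * ∏ i, ‖v i‖ := by
      rw [Finset.prod_mul_distrib, Finset.prod_const, card_univ, Fintype.card_fin]
    have hfac : (0:ℝ) < (k.factorial : ℝ) := by positivity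
    have hpp : (0:ℝ) < ∏ i, ‖v i‖ := Finset.prod_pos (fun i _ => hvi i)
    calc ‖A v‖ = ((k + 1 : ℝ) ^ k * ∏ i, ‖v i‖) * ‖A w‖ := by
          rw [hvw, norm_smul, Real.norm_eq_abs, hprod,
            abs_of_pos (mul_pos (pow_pos hki k) hpp)]
      _ ≤ ((k + 1 : ℝ) ^ k * ∏ i, ‖v i‖) *
            (2 ^ k * ‖(f : BoundedContinuousFunction (PPV.Ball E) F)‖ / (k.factorial : ℝ)) := by
          refine mul_le_mul_of_nonneg_left ?_ (by positivity)
          rw [le_div_iff₀ hfac]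
          linarith [hAw]
      _ = ((k + 1 : ℝ) ^ k * 2 ^ k / k.factorial)
            * ‖(f : BoundedContinuousFunction (PPV.Ball E) F)‖ * ∏ i, ‖v i‖ := by
          ring

def Ahat (k : ℕ) (E F : Type*) [NormedAddCommGroup E] [NormedSpace ℝ E]
    [NormedAddCommGroup F] [NormedSpace ℝ F] :
    PPV.polySet k E F →L[ℝ] ContinuousMultilinearMap ℝ (fun _ : Fin k => E) F :=
  LinearMap.mkContinuous
    { toFun := polyA
      map_add' := by
        intro f g
        have h1 := polyA_spec (f + g)
        have h2 := represents_add (polyA_spec f) (polyA_spec g)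
        exact represents_unique h1 h2
      map_smul' := by
        intro c f
        have h1 := polyA_spec (c • f)
        have h2 := represents_smul c (polyA_spec f)
        exact represents_unique h1 h2 }
    ((k + 1 : ℝ) ^ k * 2 ^ k / k.factorial)
    (by
      intro f
      exact ContinuousMultilinearMap.opNorm_le_bound (by positivity)
        (fun v => polyA_norm_bound f v))

lemma Ahat_spec {k : ℕ} (f : PPV.polySet k E F) : PPV.Represents (Ahat k E F f) ↑f :=
  polyA_spec f
def symmetrize {k : ℕ} (C : ContinuousMultilinearMap ℝ (fun _ : Fin k => E) F) :
    ContinuousMultilinearMap ℝ (fun _ : Fin k => E) F :=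
  (k.factorial : ℝ)⁻¹ • ∑ σ : Equiv.Perm (Fin k), C.domDomCongr σ

lemma symmetrize_apply {k : ℕ} (C : ContinuousMultilinearMap ℝ (fun _ : Fin k => E) F)
    (v : Fin k → E) :
    symmetrize C v = (k.factorial : ℝ)⁻¹ • ∑ σ : Equiv.Perm (Fin k), C (fun i => v (σ i)) := by
  simp [symmetrize]

lemma symmetrize_isSymm {k : ℕ} (C : ContinuousMultilinearMap ℝ (fun _ : Fin k => E) F) :
    PPV.IsSymm (symmetrize C) := by
  intro τ v
  rw [symmetrize_apply, symmetrize_apply]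
  congr 1
  calc ∑ σ : Equiv.Perm (Fin k), C (fun i => (fun j => v (τ j)) (σ i))
      = ∑ σ : Equiv.Perm (Fin k),
          (fun σ' : Equiv.Perm (Fin k) => C (fun i => v (σ' i))) ((Equiv.mulLeft τ) σ) := by
        refine Finset.sum_congr rfl fun σ _ => ?_
        congr 1
    _ = ∑ σ : Equiv.Perm (Fin k), C (fun i => v (σ i)) :=
        Equiv.sum_comp (Equiv.mulLeft τ) (fun σ' : Equiv.Perm (Fin k) => C fun i => v (σ' i))

lemma symmetrize_diag {k : ℕ} (C : ContinuousMultilinearMap ℝ (fun _ : Fin k => E) F) (z : E) :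
    symmetrize C (fun _ => z) = C (fun _ => z) := by
  rw [symmetrize_apply]
  have h1 : ∀ σ : Equiv.Perm (Fin k),
      (C fun i => (fun _ : Fin k => z) (σ i)) = C (fun _ => z) := fun σ => rfl
  rw [Finset.sum_congr rfl (fun σ _ => h1 σ), Finset.sum_const, Finset.card_univ,
    Fintype.card_perm, Fintype.card_fin, ← Nat.cast_smul_eq_nsmul ℝ, smul_smul,
    inv_mul_cancel₀ (Nat.cast_ne_zero.2 (Nat.factorial_ne_zero k)), one_smul]

lemma mem_polySet_of_diag {k : ℕ} (C : ContinuousMultilinearMap ℝ (fun _ : Fin k => E) F)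
    (f : BoundedContinuousFunction (PPV.Ball E) F)
    (h : ∀ y : PPV.Ball E, f y = C (fun _ => (y : E))) :
    f ∈ PPV.polySet k E F :=
  ⟨symmetrize C, symmetrize_isSymm C, fun y => by rw [h y, symmetrize_diag]⟩

def castCMM {a b : ℕ} (h : a = b) (C : ContinuousMultilinearMap ℝ (fun _ : Fin a => E) F) :
    ContinuousMultilinearMap ℝ (fun _ : Fin b => E) F :=
  C.domDomCongr (finCongr h)

lemma castCMM_apply {a b : ℕ} (h : a = b)
    (C : ContinuousMultilinearMap ℝ (fun _ : Fin a => E) F) (v : Fin b → E) :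
    castCMM h C v = C (fun i => v (finCongr h i)) := rfl

lemma castCMM_diag {a b : ℕ} (h : a = b)
    (C : ContinuousMultilinearMap ℝ (fun _ : Fin a => E) F) (z : E) :
    castCMM h C (fun _ => z) = C (fun _ => z) := rfl

def phiExt (φ : E →L[ℝ] ℝ) {k : ℕ} (B : ContinuousMultilinearMap ℝ (fun _ : Fin k => E) F) :
    ContinuousMultilinearMap ℝ (fun _ : Fin (k + 1) => E) F :=
  ContinuousLinearMap.uncurryLeft
    (φ.smulRight B : E →L[ℝ] ContinuousMultilinearMap ℝ (fun _ : Fin k => E) F)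

lemma phiExt_apply (φ : E →L[ℝ] ℝ) {k : ℕ}
    (B : ContinuousMultilinearMap ℝ (fun _ : Fin k => E) F) (v : Fin (k + 1) → E) :
    phiExt φ B v = φ (v 0) • B (Fin.tail v) := by
  rfl

def phiPow (φ : E →L[ℝ] ℝ) : (j : ℕ) → {s : ℕ} →
    ContinuousMultilinearMap ℝ (fun _ : Fin s => E) F →
    ContinuousMultilinearMap ℝ (fun _ : Fin (j + s) => E) F
  | 0, _, B => castCMM (by omega) B
  | j + 1, _, B => castCMM (by omega) (phiExt φ (phiPow φ j B))

lemma phiPow_diag (φ : E →L[ℝ] ℝ) (j : ℕ) {s : ℕ}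
    (B : ContinuousMultilinearMap ℝ (fun _ : Fin s => E) F) (z : E) :
    phiPow φ j B (fun _ => z) = (φ z) ^ j • B (fun _ => z) := by
  induction j with
  | zero => rw [phiPow, castCMM_diag, pow_zero, one_smul]
  | succ j ih =>
    rw [phiPow, castCMM_diag]
    have h2 : phiExt φ (phiPow φ j B) (fun _ : Fin ((j + s) + 1) => z)
        = φ z • phiPow φ j B (fun _ => z) := phiExt_apply φ _ _
    rw [h2, ih, smul_smul, pow_succ]
    ring_nf

def fixPow (x₀ : E) : (r : ℕ) → {s : ℕ} →
    ContinuousMultilinearMap ℝ (fun _ : Fin (r + s) => E) F →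
    ContinuousMultilinearMap ℝ (fun _ : Fin s => E) F
  | 0, _, C => castCMM (by omega) C
  | r + 1, s, C => fixPow x₀ r
      ((castCMM (show r + 1 + s = (r + s) + 1 by omega) C).curryLeft x₀)

lemma fixPow_diag (x₀ : E) (r : ℕ) {s : ℕ}
    (C : ContinuousMultilinearMap ℝ (fun _ : Fin (r + s) => E) F) (z : E) :
    fixPow x₀ r C (fun _ => z) = C (fun i => if (i : ℕ) < r then x₀ else z) := by
  induction r with
  | zero =>
    rw [fixPow, castCMM_diag]
    exact congrArg _ (funext fun i => (if_neg (Nat.not_lt_zero _)).symm)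
  | succ r ih =>
    rw [fixPow, ih]
    have hcl : ((castCMM (show r + 1 + s = (r + s) + 1 by omega) C).curryLeft x₀)
        (fun i : Fin (r + s) => if (i : ℕ) < r then x₀ else z)
        = castCMM (show r + 1 + s = (r + s) + 1 by omega) C
            (Fin.cons x₀ (fun i : Fin (r + s) => if (i : ℕ) < r then x₀ else z)) :=
      ContinuousMultilinearMap.curryLeft_apply _ _ _
    rw [hcl, castCMM_apply]
    congr 1
    funext i
    set i' := finCongr (show r + 1 + s = (r + s) + 1 by omega) i with hi'
    have hval : (i' : ℕ) = (i : ℕ) := rfl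
    rcases Fin.eq_zero_or_eq_succ i' with h0 | ⟨j, hj⟩
    · have : (i : ℕ) = 0 := by rw [← hval, h0]; rfl
      rw [h0, Fin.cons_zero, if_pos]
      omega
    · have hvs : (i : ℕ) = (j : ℕ) + 1 := by rw [← hval, hj]; simp
      rw [hj, Fin.cons_succ]
      by_cases hc : (j : ℕ) < r
      · rw [if_pos hc, if_pos (by omega)]
      · rw [if_neg hc, if_neg (by omega)]

open Finset in
lemma vector_coeff_unique {N : ℕ} (a b : ℕ → F)
    (h : ∀ t : ℝ, ∑ j ∈ Finset.range N, t ^ j • a j = ∑ j ∈ Finset.range N, t ^ j • b j) :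
    ∀ j, j < N → a j = b j := by
  intro j hj
  have hd : ∀ t : ℝ, ∑ i ∈ Finset.range N, t ^ i • (a i - b i) = 0 := by
    intro t
    simp only [smul_sub, Finset.sum_sub_distrib, h t, sub_self]
  rw [← sub_eq_zero]
  refine (Module.forall_dual_apply_eq_zero_iff ℝ _).1 ?_
  intro ψ
  have hψ : ∀ t : ℝ, ∑ i ∈ Finset.range N, ψ (a i - b i) * t ^ i = 0 := by
    intro t
    have h2 := congrArg ψ (hd t)
    rw [map_sum, map_zero] at h2
    calc ∑ i ∈ Finset.range N, ψ (a i - b i) * t ^ i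
        = ∑ i ∈ Finset.range N, ψ (t ^ i • (a i - b i)) := by
          refine Finset.sum_congr rfl fun i _ => ?_
          rw [map_smul, smul_eq_mul, mul_comm]
      _ = 0 := h2
  set p : Polynomial ℝ :=
    ∑ i ∈ Finset.range N, Polynomial.C (ψ (a i - b i)) * Polynomial.X ^ i with hp
  have heval : ∀ t, p.eval t = 0 := by
    intro t
    rw [hp, Polynomial.eval_finset_sum]
    simpa using hψ t
  have hp0 : p = 0 := Polynomial.funext (fun t => by rw [heval t, Polynomial.eval_zero])
  have hc := congrArg (fun q => Polynomial.coeff q j) hp0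
  rw [hp] at hc
  simp only [Polynomial.finset_sum_coeff, Polynomial.coeff_C_mul, Polynomial.coeff_X_pow,
    Polynomial.coeff_zero, mul_ite, mul_one, mul_zero] at hc
  rwa [Finset.sum_ite_eq (Finset.range N) j (fun i => ψ (a i - b i)),
    if_pos (Finset.mem_range.2 hj)] at hc
section Construction

variable (φ : E →L[ℝ] ℝ) (x₀ : E)

lemma abs_phi_le (hφ : ‖φ‖ ≤ 1) (x : PPV.Ball E) : |φ (x : E)| ≤ 1 := by
  have hx : ‖(x : E)‖ ≤ 1 := mem_closedBall_zero_iff.1 x.2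
  calc |φ (x : E)| = ‖φ (x : E)‖ := (Real.norm_eq_abs _).symm
    _ ≤ ‖φ‖ * ‖(x : E)‖ := φ.le_opNorm _
    _ ≤ 1 * 1 := mul_le_mul hφ hx (norm_nonneg _) zero_le_one
    _ = 1 := one_mul 1

lemma mulPhi_bound (hφ : ‖φ‖ ≤ 1) (p : ℕ)
    (f : BoundedContinuousFunction (PPV.Ball E) F) :
    ∀ y : PPV.Ball E, ‖φ (y : E) ^ p • f y‖ ≤ ‖f‖ := by
  intro y
  rw [norm_smul, Real.norm_eq_abs, abs_pow]
  calc |φ (y : E)| ^ p * ‖f y‖ ≤ 1 * ‖f y‖ := by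
        refine mul_le_mul_of_nonneg_right ?_ (norm_nonneg _)
        exact pow_le_one₀ (abs_nonneg _) (abs_phi_le φ hφ y)
    _ = ‖f y‖ := one_mul _
    _ ≤ ‖f‖ := BoundedContinuousFunction.norm_coe_le_norm f y

/-- multiplication by `φ^p` as a bounded operator on bounded continuous functions. -/
def mulPhi (hφ : ‖φ‖ ≤ 1) (p : ℕ) :
    BoundedContinuousFunction (PPV.Ball E) F →L[ℝ] BoundedContinuousFunction (PPV.Ball E) F :=
  LinearMap.mkContinuous
    { toFun := fun f => BoundedContinuousFunction.ofNormedAddCommGroup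
        (fun y : PPV.Ball E => φ (y : E) ^ p • f y)
        (Continuous.smul (((φ.continuous.comp continuous_subtype_val).pow p)) f.continuous)
        ‖f‖ (mulPhi_bound φ hφ p f)
      map_add' := by
        intro f g
        ext y
        simp [smul_add]
      map_smul' := by
        intro c f
        ext y
        simp [smul_smul, mul_comm] }
    1
    (by
      intro f
      rw [one_mul]
      exact BoundedContinuousFunction.norm_ofNormedAddCommGroup_le _ (norm_nonneg f)
        (mulPhi_bound φ hφ p f))

lemma mulPhi_apply (hφ : ‖φ‖ ≤ 1) (p : ℕ)
    (f : BoundedContinuousFunction (PPV.Ball E) F) (y : PPV.Ball E) :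
    mulPhi φ hφ p f y = φ (y : E) ^ p • f y := rfl

/-- the embedding `P ↦ φ^{n-m}·P`. -/
def iotaL (hφ : ‖φ‖ ≤ 1) (m n : ℕ) (hmn : m ≤ n) :
    PPV.polySet m E F →L[ℝ] PPV.polySet n E F :=
  ContinuousLinearMap.codRestrict
    ((mulPhi φ hφ (n - m)).comp (PPV.polySet m E F).subtypeL)
    (PPV.polySet n E F)
    (by
      intro P
      refine mem_polySet_of_diag
        (castCMM (show (n - m) + m = n by omega) (phiPow φ (n - m) (Ahat m E F P))) _ ?_
      intro y
      rw [castCMM_diag, phiPow_diag]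
      have := (Ahat_spec P).2 y
      rw [ContinuousLinearMap.coe_comp', Function.comp_apply]
      rw [mulPhi_apply]
      rw [← this]
      rfl)

end Construction
section Rho

variable (φ : E →L[ℝ] ℝ) (x₀ : E)

def Lmap : E →L[ℝ] E := ContinuousLinearMap.id ℝ E - φ.smulRight x₀

lemma Lmap_apply (z : E) : Lmap φ x₀ z = z - φ z • x₀ := rfl

def vecn (m n j : ℕ) (x : E) : Fin n → E :=
  fun i => if (i : ℕ) < n - m + j then x₀ else x - φ x • x₀

lemma vecn_norm_le (hφ : ‖φ‖ ≤ 1) (hx₀ : ‖x₀‖ ≤ 1) {m n j : ℕ} (x : PPV.Ball E)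
    (i : Fin n) : ‖vecn φ x₀ m n j (x : E) i‖ ≤ 2 := by
  have hx : ‖(x : E)‖ ≤ 1 := mem_closedBall_zero_iff.1 x.2
  rw [vecn]
  by_cases h : (i : ℕ) < n - m + j
  · rw [if_pos h]; linarith
  · rw [if_neg h]
    calc ‖(x : E) - φ (x : E) • x₀‖ ≤ ‖(x : E)‖ + ‖φ (x : E) • x₀‖ := norm_sub_le _ _
      _ ≤ 1 + 1 := by
          refine add_le_add hx ?_
          rw [norm_smul, Real.norm_eq_abs]
          calc |φ (x : E)| * ‖x₀‖ ≤ 1 * 1 :=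
                mul_le_mul (abs_phi_le φ hφ x) hx₀ (norm_nonneg _) zero_le_one
            _ = 1 := one_mul 1
      _ = 2 := by norm_num

lemma rho_val_cont (m n j : ℕ) (A : ContinuousMultilinearMap ℝ (fun _ : Fin n => E) F) :
    Continuous (fun x : PPV.Ball E =>
      ((n.choose (m - j) : ℝ) * φ (x : E) ^ j) • A (vecn φ x₀ m n j (x : E))) := by
  apply Continuous.smul
  · exact continuous_const.mul ((φ.continuous.comp continuous_subtype_val).pow j)
  · refine A.cont.comp (continuous_pi fun i => ?_)
    by_cases h : (i : ℕ) < n - m + j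
    · simp only [vecn, if_pos h]
      exact continuous_const
    · simp only [vecn, if_neg h]
      exact continuous_subtype_val.sub
        ((φ.continuous.comp continuous_subtype_val).smul continuous_const)

lemma rho_val_bound (hφ : ‖φ‖ ≤ 1) (hx₀ : ‖x₀‖ ≤ 1) (m n : ℕ)
    (A : ContinuousMultilinearMap ℝ (fun _ : Fin n => E) F) (x : PPV.Ball E) :
    ‖∑ j ∈ Finset.range (m + 1),
        ((n.choose (m - j) : ℝ) * φ (x : E) ^ j) • A (vecn φ x₀ m n j (x : E))‖
      ≤ ((∑ j ∈ Finset.range (m + 1), (n.choose (m - j) : ℝ)) * 2 ^ n) * ‖A‖ := by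
  refine le_trans (norm_sum_le _ _) ?_
  have hterm : ∀ j ∈ Finset.range (m + 1),
      ‖((n.choose (m - j) : ℝ) * φ (x : E) ^ j) • A (vecn φ x₀ m n j (x : E))‖
        ≤ (n.choose (m - j) : ℝ) * (2 ^ n * ‖A‖) := by
    intro j _
    rw [norm_smul, Real.norm_eq_abs, abs_mul, abs_pow]
    have h1 : |(n.choose (m - j) : ℝ)| * |φ (x : E)| ^ j ≤ (n.choose (m - j) : ℝ) := by
      rw [abs_of_nonneg (by positivity)]
      calc (n.choose (m - j) : ℝ) * |φ (x : E)| ^ j ≤ (n.choose (m - j) : ℝ) * 1 := by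
            refine mul_le_mul_of_nonneg_left ?_ (by positivity)
            exact pow_le_one₀ (abs_nonneg _) (abs_phi_le φ hφ x)
        _ = _ := mul_one _
    have h2 : ‖A (vecn φ x₀ m n j (x : E))‖ ≤ 2 ^ n * ‖A‖ := by
      calc ‖A (vecn φ x₀ m n j (x : E))‖ ≤ ‖A‖ * ∏ i, ‖vecn φ x₀ m n j (x : E) i‖ :=
            A.le_opNorm _
        _ ≤ ‖A‖ * 2 ^ n := by
            refine mul_le_mul_of_nonneg_left ?_ (norm_nonneg _)
            calc ∏ i, ‖vecn φ x₀ m n j (x : E) i‖ ≤ ∏ _i : Fin n, (2 : ℝ) :=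
                  Finset.prod_le_prod (fun i _ => norm_nonneg _)
                    (fun i _ => vecn_norm_le φ x₀ hφ hx₀ x i)
              _ = 2 ^ n := by rw [Finset.prod_const, Finset.card_univ, Fintype.card_fin]
        _ = 2 ^ n * ‖A‖ := mul_comm _ _
    exact mul_le_mul h1 h2 (norm_nonneg _) (by positivity)
  refine le_trans (Finset.sum_le_sum hterm) ?_
  rw [← Finset.sum_mul]
  exact le_of_eq (by ring)

def rho0 (hφ : ‖φ‖ ≤ 1) (hx₀ : ‖x₀‖ ≤ 1) (m n : ℕ) :
    ContinuousMultilinearMap ℝ (fun _ : Fin n => E) F →L[ℝ]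
      BoundedContinuousFunction (PPV.Ball E) F :=
  LinearMap.mkContinuous
    { toFun := fun A => BoundedContinuousFunction.ofNormedAddCommGroup
        (fun x : PPV.Ball E => ∑ j ∈ Finset.range (m + 1),
          ((n.choose (m - j) : ℝ) * φ (x : E) ^ j) • A (vecn φ x₀ m n j (x : E)))
        (continuous_finset_sum _ (fun j _ => rho_val_cont φ x₀ m n j A))
        (((∑ j ∈ Finset.range (m + 1), (n.choose (m - j) : ℝ)) * 2 ^ n) * ‖A‖)
        (rho_val_bound φ x₀ hφ hx₀ m n A)
      map_add' := by
        intro A B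
        ext y
        simp [ContinuousMultilinearMap.add_apply, smul_add, Finset.sum_add_distrib]
      map_smul' := by
        intro c A
        ext y
        simp only [BoundedContinuousFunction.coe_ofNormedAddCommGroup,
          ContinuousMultilinearMap.smul_apply, RingHom.id_apply,
          BoundedContinuousFunction.coe_smul, Pi.smul_apply, Finset.smul_sum]
        refine Finset.sum_congr rfl fun j _ => ?_
        rw [smul_comm] }
    ((∑ j ∈ Finset.range (m + 1), (n.choose (m - j) : ℝ)) * 2 ^ n)
    (by
      intro A
      exact BoundedContinuousFunction.norm_ofNormedAddCommGroup_le _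
        (by positivity) (rho_val_bound φ x₀ hφ hx₀ m n A))

lemma rho0_apply (hφ : ‖φ‖ ≤ 1) (hx₀ : ‖x₀‖ ≤ 1) (m n : ℕ)
    (A : ContinuousMultilinearMap ℝ (fun _ : Fin n => E) F) (x : PPV.Ball E) :
    rho0 φ x₀ hφ hx₀ m n A x = ∑ j ∈ Finset.range (m + 1),
      ((n.choose (m - j) : ℝ) * φ (x : E) ^ j) • A (vecn φ x₀ m n j (x : E)) := rfl

end Rho
section RhoL

variable (φ : E →L[ℝ] ℝ) (x₀ : E)

def DjCMM (m n j : ℕ) (A : ContinuousMultilinearMap ℝ (fun _ : Fin n => E) F) :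
    ContinuousMultilinearMap ℝ (fun _ : Fin m => E) F :=
  if h : j ≤ m ∧ m ≤ n then
    castCMM (show j + (m - j) = m by omega)
      (phiPow φ j
        ((fixPow x₀ (n - m + j)
          (castCMM (show n = (n - m + j) + (m - j) by omega) A)).compContinuousLinearMap
          (fun _ => Lmap φ x₀)))
  else 0

lemma DjCMM_diag (m n j : ℕ) (h : j ≤ m ∧ m ≤ n)
    (A : ContinuousMultilinearMap ℝ (fun _ : Fin n => E) F) (z : E) :
    DjCMM φ x₀ m n j A (fun _ => z)
      = (φ z) ^ j •
          A (fun i : Fin n => if (i : ℕ) < n - m + j then x₀ else z - φ z • x₀) := by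
  rw [DjCMM, dif_pos h, castCMM_diag, phiPow_diag]
  congr 1
  have h1 : ((fixPow x₀ (n - m + j)
        (castCMM (show n = (n - m + j) + (m - j) by omega) A)).compContinuousLinearMap
        (fun _ => Lmap φ x₀)) (fun _ => z)
      = (fixPow x₀ (n - m + j) (castCMM (show n = (n - m + j) + (m - j) by omega) A))
          (fun _ => Lmap φ x₀ z) :=
    ContinuousMultilinearMap.compContinuousLinearMap_apply _ _ _
  rw [h1, fixPow_diag, castCMM_apply]
  congr 1

def rhoL (hφ : ‖φ‖ ≤ 1) (hx₀ : ‖x₀‖ ≤ 1) (m n : ℕ) (hmn : m ≤ n) :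
    PPV.polySet n E F →L[ℝ] PPV.polySet m E F :=
  ContinuousLinearMap.codRestrict ((rho0 φ x₀ hφ hx₀ m n).comp (Ahat n E F))
    (PPV.polySet m E F)
    (by
      intro Q
      refine mem_polySet_of_diag
        (∑ j ∈ Finset.range (m + 1),
          (n.choose (m - j) : ℝ) • DjCMM φ x₀ m n j (Ahat n E F Q)) _ ?_
      intro y
      rw [ContinuousLinearMap.coe_comp', Function.comp_apply, rho0_apply,
        ContinuousMultilinearMap.sum_apply]
      refine Finset.sum_congr rfl fun j hj => ?_
      have hjm : j ≤ m := by rw [Finset.mem_range] at hj; omega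
      rw [ContinuousMultilinearMap.smul_apply,
        DjCMM_diag φ x₀ m n j ⟨hjm, hmn⟩, smul_smul]
      rfl)

lemma rhoL_apply (hφ : ‖φ‖ ≤ 1) (hx₀ : ‖x₀‖ ≤ 1) (m n : ℕ) (hmn : m ≤ n)
    (Q : PPV.polySet n E F) (x : PPV.Ball E) :
    (rhoL φ x₀ hφ hx₀ m n hmn Q : BoundedContinuousFunction (PPV.Ball E) F) x
      = ∑ j ∈ Finset.range (m + 1),
          ((n.choose (m - j) : ℝ) * φ (x : E) ^ j) •
            (Ahat n E F Q) (vecn φ x₀ m n j (x : E)) := rfl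

end RhoL
open Finset in
lemma key_identity {m n : ℕ} (hmn : m ≤ n) (φ : E →L[ℝ] ℝ) (x₀ : E) (hφx₀ : φ x₀ = 1)
    (A : ContinuousMultilinearMap ℝ (fun _ : Fin n => E) F)
    (B : ContinuousMultilinearMap ℝ (fun _ : Fin m => E) F)
    (hA : PPV.IsSymm A) (hB : PPV.IsSymm B)
    (hAB : ∀ z : E, (A fun _ => z) = (φ z) ^ (n - m) • B (fun _ => z)) (x : E) :
    ∑ j ∈ range (m + 1), ((n.choose (m - j) : ℝ) * (φ x) ^ j) •
        A (fun i : Fin n => if (i : ℕ) < n - m + j then x₀ else x - φ x • x₀)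
      = B (fun _ => x) := by
  classical
  set y := x - φ x • x₀ with hy
  have hφy : φ y = 0 := by rw [hy]; simp [hφx₀]
  set a' : ℕ → F := fun k => (n.choose k : ℝ) • A (fun i => if (i : ℕ) < k then x₀ else y)
    with ha'
  set b' : ℕ → F := fun k => if n - m ≤ k then
      (m.choose (k - (n - m)) : ℝ) • B (fun i => if (i : ℕ) < k - (n - m) then x₀ else y)
    else 0 with hb'
  have hpoly : ∀ t : ℝ,
      ∑ k ∈ range (n + 1), t ^ k • a' k = ∑ k ∈ range (n + 1), t ^ k • b' k := by
    intro t
    have hL : ∑ k ∈ range (n + 1), t ^ k • a' k = A (fun _ => t • x₀ + y) := by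
      rw [binomial_diag A hA x₀ y t]
      refine Finset.sum_congr rfl fun k _ => ?_
      rw [ha']
      simp only []
      rw [smul_smul, mul_comm]
    have hφt : φ (t • x₀ + y) = t := by simp [hφx₀, hφy]
    have hR : A (fun _ => t • x₀ + y) = ∑ k ∈ range (n + 1), t ^ k • b' k := by
      rw [hAB (t • x₀ + y), hφt, binomial_diag B hB x₀ y t, Finset.smul_sum]
      have hsplit : ∑ k ∈ range (n + 1), t ^ k • b' k
          = ∑ k ∈ Finset.Ico 0 (n - m), t ^ k • b' k
            + ∑ k ∈ Finset.Ico (n - m) (n + 1), t ^ k • b' k := by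
        rw [Finset.sum_Ico_consecutive _ (Nat.zero_le _) (by omega), Finset.range_eq_Ico]
      have hzero : ∑ k ∈ Finset.Ico 0 (n - m), t ^ k • b' k = 0 := by
        refine Finset.sum_eq_zero fun k hk => ?_
        rw [Finset.mem_Ico] at hk
        rw [hb']
        simp only []
        rw [if_neg (by omega), smul_zero]
      have hshift : ∑ k ∈ Finset.Ico (n - m) (n + 1), t ^ k • b' k
          = ∑ j ∈ range (m + 1), t ^ (n - m + j) • b' (n - m + j) := by
        have hc : (n + 1) - (n - m) = m + 1 := by omega
        rw [Finset.sum_Ico_eq_sum_range, hc]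
      rw [hsplit, hzero, zero_add, hshift]
      refine Finset.sum_congr rfl fun j hj => ?_
      have hidx : n - m + j - (n - m) = j := by omega
      rw [hb']
      simp only []
      rw [if_pos (Nat.le_add_right _ _), hidx, smul_smul, smul_smul, pow_add]
      ring_nf
    rw [hL, hR]
  have hcoef := vector_coeff_unique a' b' hpoly
  calc ∑ j ∈ range (m + 1), ((n.choose (m - j) : ℝ) * (φ x) ^ j) •
        A (fun i : Fin n => if (i : ℕ) < n - m + j then x₀ else y)
      = ∑ j ∈ range (m + 1), (φ x) ^ j • a' (n - m + j) := by
        refine Finset.sum_congr rfl fun j hj => ?_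
        rw [Finset.mem_range] at hj
        have hch : (n.choose (m - j)) = (n.choose (n - m + j)) := by
          rw [← Nat.choose_symm (show m - j ≤ n by omega)]
          congr 1
          omega
        rw [ha']
        simp only []
        rw [smul_smul, mul_comm, hch]
    _ = ∑ j ∈ range (m + 1), (φ x) ^ j • b' (n - m + j) := by
        refine Finset.sum_congr rfl fun j hj => ?_
        rw [Finset.mem_range] at hj
        rw [hcoef (n - m + j) (by omega)]
    _ = ∑ j ∈ range (m + 1), ((m.choose j : ℝ) * (φ x) ^ j) •
          B (fun i : Fin m => if (i : ℕ) < j then x₀ else y) := by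
        refine Finset.sum_congr rfl fun j hj => ?_
        have hidx : n - m + j - (n - m) = j := by omega
        rw [hb']
        simp only []
        rw [if_pos (Nat.le_add_right _ _), hidx, smul_smul, mul_comm]
    _ = B (fun _ => (φ x) • x₀ + y) := (binomial_diag B hB x₀ y (φ x)).symm
    _ = B (fun _ => x) := by
        congr 1
        funext i
        rw [hy]
        abel
lemma diag_hom_ext {m n : ℕ} (hmn : m ≤ n) (φ : E →L[ℝ] ℝ)
    (A : ContinuousMultilinearMap ℝ (fun _ : Fin n => E) F)
    (B : ContinuousMultilinearMap ℝ (fun _ : Fin m => E) F)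
    (h : ∀ z : E, ‖z‖ ≤ 1 → (A fun _ => z) = (φ z) ^ (n - m) • B (fun _ => z)) :
    ∀ z : E, (A fun _ => z) = (φ z) ^ (n - m) • B (fun _ => z) := by
  intro z
  set c := max ‖z‖ 1 with hcdef
  have hc : 0 < c := lt_of_lt_of_le one_pos (le_max_right _ _)
  have hz1 : ‖c⁻¹ • z‖ ≤ 1 := by
    rw [norm_smul, norm_inv, Real.norm_eq_abs, abs_of_pos hc]
    calc c⁻¹ * ‖z‖ ≤ c⁻¹ * c :=
          mul_le_mul_of_nonneg_left (le_max_left _ _) (inv_nonneg.2 hc.le)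
      _ = 1 := inv_mul_cancel₀ hc.ne'
  have hrec : z = c • (c⁻¹ • z) := (smul_inv_smul₀ hc.ne' z).symm
  have hφ : φ z = c * φ (c⁻¹ • z) := by
    conv_lhs => rw [hrec]
    rw [map_smul, smul_eq_mul]
  have hpow : c ^ (n - m) * c ^ m = c ^ n := by
    rw [← pow_add]
    congr 1
    omega
  calc (A fun _ => z) = A (fun _ => c • (c⁻¹ • z)) := by rw [← hrec]
    _ = c ^ n • A (fun _ => c⁻¹ • z) := diag_scale A c _
    _ = c ^ n • ((φ (c⁻¹ • z)) ^ (n - m) • B (fun _ => c⁻¹ • z)) := by rw [h _ hz1]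
    _ = (c ^ n * (φ (c⁻¹ • z)) ^ (n - m)) • B (fun _ => c⁻¹ • z) := by rw [smul_smul]
    _ = (φ z) ^ (n - m) • B (fun _ => z) := by
        have hBz : B (fun _ => z) = c ^ m • B (fun _ => c⁻¹ • z) := by
          conv_lhs => rw [hrec]
          exact diag_scale B c _
        rw [hφ, hBz, smul_smul, mul_pow]
        congr 1
        rw [← hpow]
        ring
end Helpers
theorem stmt1 (E F : Type*) [NormedAddCommGroup E] [NormedSpace ℝ E] [CompleteSpace E]
    [NormedAddCommGroup F] [NormedSpace ℝ F] [CompleteSpace F] [Nontrivial E]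
    (m n : ℕ) (hmn : m ≤ n) :
    ContainsComplCopy (polySet m E F) (polySet n E F) := by
  classical
  obtain ⟨x', hx'⟩ := exists_ne (0 : E)
  have hx0norm : ‖(‖x'‖⁻¹ • x' : E)‖ = 1 := norm_smul_inv_norm hx'
  set x₀ : E := ‖x'‖⁻¹ • x' with hx₀def
  have hx0ne : x₀ ≠ 0 := by
    intro h
    rw [h] at hx0norm
    simp at hx0norm
  obtain ⟨φ, hφ1, hφx₀⟩ := exists_dual_vector ℝ x₀ (norm_ne_zero_iff.2 hx0ne)
  rw [hx0norm] at hφx₀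
  have hφle : ‖φ‖ ≤ 1 := le_of_eq hφ1
  have hx₀le : ‖x₀‖ ≤ 1 := le_of_eq hx0norm
  have hρι : ∀ P : polySet m E F,
      rhoL (E := E) (F := F) φ x₀ hφle hx₀le m n hmn (iotaL (E := E) (F := F) φ hφle m n hmn P) = P := by
    intro P
    apply Subtype.ext
    apply BoundedContinuousFunction.ext
    intro x
    have hAs := Ahat_spec (iotaL (E := E) (F := F) φ hφle m n hmn P)
    have hBs := Ahat_spec P
    have hAB : ∀ z : E, ((Ahat n E F (iotaL (E := E) (F := F) φ hφle m n hmn P)) fun _ => z)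
        = (φ z) ^ (n - m) • ((Ahat m E F P) fun _ => z) := by
      refine diag_hom_ext hmn φ _ _ ?_
      intro z hz
      have hz' : z ∈ PPV.Ball E := mem_ball_of_norm hz
      have h1 := hAs.2 ⟨z, hz'⟩
      have h2 := hBs.2 ⟨z, hz'⟩
      have h3 : ((iotaL (E := E) (F := F) φ hφle m n hmn P : BoundedContinuousFunction (Ball E) F)) ⟨z, hz'⟩
          = φ z ^ (n - m) • (P : BoundedContinuousFunction (Ball E) F) ⟨z, hz'⟩ := rfl
      rw [← h1, ← h2]
      exact h3
    have hkey := key_identity hmn φ x₀ hφx₀ _ _ hAs.1 hBs.1 hAB (x : E)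
    calc (rhoL (E := E) (F := F) φ x₀ hφle hx₀le m n hmn (iotaL (E := E) (F := F) φ hφle m n hmn P) :
            BoundedContinuousFunction (Ball E) F) x
        = ∑ j ∈ Finset.range (m + 1),
            ((n.choose (m - j) : ℝ) * φ (x : E) ^ j) •
              (Ahat n E F (iotaL (E := E) (F := F) φ hφle m n hmn P)) (vecn φ x₀ m n j (x : E)) :=
          rhoL_apply φ x₀ hφle hx₀le m n hmn _ x
      _ = (Ahat m E F P) (fun _ => (x : E)) := hkey
      _ = (P : BoundedContinuousFunction (Ball E) F) x := (hBs.2 x).symm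
  refine ⟨iotaL (E := E) (F := F) φ hφle m n hmn,
    ⟨(‖rhoL (E := E) (F := F) φ x₀ hφle hx₀le m n hmn‖ + 1)⁻¹, by positivity, ?_⟩,
    (iotaL (E := E) (F := F) φ hφle m n hmn).comp (rhoL (E := E) (F := F) φ x₀ hφle hx₀le m n hmn), ?_, ?_⟩
  · intro P
    have h1 : ‖P‖ ≤ (‖rhoL (E := E) (F := F) φ x₀ hφle hx₀le m n hmn‖ + 1) * ‖iotaL (E := E) (F := F) φ hφle m n hmn P‖ := by
      calc ‖P‖ = ‖rhoL (E := E) (F := F) φ x₀ hφle hx₀le m n hmn (iotaL (E := E) (F := F) φ hφle m n hmn P)‖ := by rw [hρι P]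
        _ ≤ ‖rhoL (E := E) (F := F) φ x₀ hφle hx₀le m n hmn‖ * ‖iotaL (E := E) (F := F) φ hφle m n hmn P‖ :=
            (rhoL (E := E) (F := F) φ x₀ hφle hx₀le m n hmn).le_opNorm _
        _ ≤ (‖rhoL (E := E) (F := F) φ x₀ hφle hx₀le m n hmn‖ + 1) * ‖iotaL (E := E) (F := F) φ hφle m n hmn P‖ :=
            mul_le_mul_of_nonneg_right (by linarith) (norm_nonneg _)
    calc (‖rhoL (E := E) (F := F) φ x₀ hφle hx₀le m n hmn‖ + 1)⁻¹ * ‖P‖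
        ≤ (‖rhoL (E := E) (F := F) φ x₀ hφle hx₀le m n hmn‖ + 1)⁻¹ *
            ((‖rhoL (E := E) (F := F) φ x₀ hφle hx₀le m n hmn‖ + 1) * ‖iotaL (E := E) (F := F) φ hφle m n hmn P‖) :=
          mul_le_mul_of_nonneg_left h1 (by positivity)
      _ = ‖iotaL (E := E) (F := F) φ hφle m n hmn P‖ := by
          rw [← mul_assoc, inv_mul_cancel₀ (by positivity), one_mul]
  · intro Q
    exact ⟨rhoL (E := E) (F := F) φ x₀ hφle hx₀le m n hmn Q, rfl⟩
  · rintro q ⟨P, rfl⟩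
    show iotaL (E := E) (F := F) φ hφle m n hmn (rhoL (E := E) (F := F) φ x₀ hφle hx₀le m n hmn (iotaL (E := E) (F := F) φ hφle m n hmn P))
      = iotaL (E := E) (F := F) φ hφle m n hmn P
    rw [hρι P]

end Stmts
end
end

section
/- Let E and F be real Banach spaces and let k ≥ 2. If C ∈ L_s(E,P(^{k-1}E,F)) is a compact operator (C maps the closed unit ball of E onto a relatively norm-compact subset of P(^{k-1}E,F)), then C(x) ∈ P_wb(^{k-1}E,F) for every x ∈ E. -/
noncomputable section

open Metric Filter Topology
open scoped ENNReal NNReal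

namespace Stmts
open PPV Metric Filter Topology
open scoped ENNReal NNReal


section Aux

open Finset in
private lemma sum_powerset_neg_one_real {α : Type*} [DecidableEq α] (x : Finset α) :
    (∑ m ∈ x.powerset, (-1 : ℝ) ^ m.card) = if x = ∅ then 1 else 0 := by
  have h := Finset.sum_powerset_neg_one_pow_card (α := α) (x := x)
  have : ((∑ m ∈ x.powerset, (-1 : ℤ) ^ m.card : ℤ) : ℝ) = ∑ m ∈ x.powerset, (-1 : ℝ) ^ m.card := by
    push_cast; ring
  rw [← this, h]
  split <;> norm_num

private lemma neg_one_pow_sub {m n : ℕ} (h : n ≤ m) :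
    ((-1 : ℝ)) ^ (m - n) = (-1) ^ m * (-1) ^ n := by
  have h2 : ((-1 : ℝ)) ^ n * (-1) ^ n = 1 := by
    rw [← pow_add, ← two_mul, pow_mul]; norm_num
  calc ((-1 : ℝ)) ^ (m - n) = (-1) ^ (m - n) * ((-1) ^ n * (-1) ^ n) := by rw [h2, mul_one]
    _ = ((-1 : ℝ)) ^ (m - n) * (-1) ^ n * (-1) ^ n := by ring
    _ = (-1) ^ m * (-1) ^ n := by rw [← pow_add, Nat.sub_add_cancel h]

private lemma coeff_sum {k : ℕ} (r : Fin k → Fin k) :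
    (∑ S ∈ (Finset.univ : Finset (Fin k)).powerset,
        if (∀ t, r t ∈ S) then ((-1 : ℝ) ^ (k - S.card)) else 0)
      = if Function.Surjective r then 1 else 0 := by
  classical
  set R : Finset (Fin k) := Finset.image r Finset.univ with hRdef
  have hcond : ∀ S : Finset (Fin k), (∀ t, r t ∈ S) ↔ R ⊆ S := fun S =>
    ⟨fun h y hy => by obtain ⟨t, -, rfl⟩ := Finset.mem_image.1 hy; exact h t,
     fun h t => h (Finset.mem_image_of_mem r (Finset.mem_univ t))⟩
  have step1 : (∑ S ∈ (Finset.univ : Finset (Fin k)).powerset,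
      if (∀ t, r t ∈ S) then ((-1 : ℝ) ^ (k - S.card)) else 0)
      = ∑ S ∈ ((Finset.univ : Finset (Fin k)).powerset).filter (fun S => R ⊆ S),
          ((-1 : ℝ) ^ (k - S.card)) := by
    rw [Finset.sum_filter]
    exact Finset.sum_congr rfl fun S _ => by rw [if_congr (hcond S) rfl rfl]
  have step2 : ∑ S ∈ ((Finset.univ : Finset (Fin k)).powerset).filter (fun S => R ⊆ S),
      ((-1 : ℝ) ^ (k - S.card))
      = ∑ T ∈ (Finset.univ \ R).powerset, ((-1 : ℝ) ^ (k - (R ∪ T).card)) := by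
    refine Finset.sum_bij' (fun S _ => S \ R) (fun T _ => R ∪ T) ?_ ?_ ?_ ?_ ?_
    · intro S hS
      rw [Finset.mem_powerset]
      intro y hy
      rw [Finset.mem_sdiff] at hy ⊢
      exact ⟨Finset.mem_univ y, hy.2⟩
    · intro T hT
      rw [Finset.mem_filter]
      exact ⟨Finset.mem_powerset.2 (Finset.subset_univ _), Finset.subset_union_left⟩
    · intro S hS
      rw [Finset.mem_filter] at hS
      exact Finset.union_sdiff_of_subset hS.2
    · intro T hT
      rw [Finset.mem_powerset] at hT
      refine Finset.union_sdiff_cancel_left ?_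
      rw [Finset.disjoint_right]
      intro y hy
      exact (Finset.mem_sdiff.1 (hT hy)).2
    · intro S hS
      rw [Finset.mem_filter] at hS
      rw [Finset.union_sdiff_of_subset hS.2]
  rw [step1, step2]
  have hdisj : ∀ T ∈ (Finset.univ \ R).powerset, Disjoint R T := by
    intro T hT
    rw [Finset.mem_powerset] at hT
    rw [Finset.disjoint_right]
    intro y hy
    exact (Finset.mem_sdiff.1 (hT hy)).2
  have hcard : ∀ T ∈ (Finset.univ \ R).powerset,
      ((-1 : ℝ)) ^ (k - (R ∪ T).card)
        = ((-1 : ℝ)) ^ k * (-1 : ℝ) ^ R.card * ((-1 : ℝ)) ^ T.card := by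
    intro T hT
    have hle : (R ∪ T).card ≤ k := by
      have := Finset.card_le_univ (R ∪ T)
      simpa using this
    rw [neg_one_pow_sub hle, Finset.card_union_of_disjoint (hdisj T hT), pow_add, mul_assoc]
  rw [Finset.sum_congr rfl hcard]
  have factor : ∑ T ∈ (Finset.univ \ R).powerset,
      ((-1 : ℝ)) ^ k * (-1 : ℝ) ^ R.card * ((-1 : ℝ)) ^ T.card
      = ((-1 : ℝ)) ^ k * (-1 : ℝ) ^ R.card *
        ∑ T ∈ (Finset.univ \ R).powerset, ((-1 : ℝ)) ^ T.card := by
    rw [Finset.mul_sum]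
  rw [factor, sum_powerset_neg_one_real]
  by_cases hsurj : Function.Surjective r
  · have hRuniv : R = Finset.univ := by
      apply Finset.eq_univ_iff_forall.2
      intro y
      obtain ⟨t, rfl⟩ := hsurj y
      exact Finset.mem_image_of_mem r (Finset.mem_univ t)
    rw [if_pos hsurj, hRuniv]
    rw [if_pos (Finset.sdiff_self _), Finset.card_univ, Fintype.card_fin, mul_one, ← pow_add,
      ← two_mul, pow_mul]
    norm_num
  · have hne : Finset.univ \ R ≠ ∅ := by
      intro hempty
      apply hsurj
      intro y
      have : y ∈ R := by
        by_contra hy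
        have : y ∈ Finset.univ \ R := Finset.mem_sdiff.2 ⟨Finset.mem_univ y, hy⟩
        rw [hempty] at this
        exact absurd this (Finset.notMem_empty y)
      obtain ⟨t, -, ht⟩ := Finset.mem_image.1 this
      exact ⟨t, ht⟩
    rw [if_neg hsurj, if_neg hne, mul_zero]

variable {E F : Type*} [NormedAddCommGroup E] [NormedSpace ℝ E]
    [NormedAddCommGroup F] [NormedSpace ℝ F]

private lemma polar_identity {k : ℕ}
    (B : ContinuousMultilinearMap ℝ (fun _ : Fin k => E) F) (hB : PPV.IsSymm B)
    (v : Fin k → E) :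
    ∑ S ∈ (Finset.univ : Finset (Fin k)).powerset,
        ((-1 : ℝ) ^ (k - S.card)) • B (fun _ => ∑ i ∈ S, v i) = ((Nat.factorial k : ℕ) : ℝ) • B v := by
  classical
  have expand : ∀ S : Finset (Fin k), B (fun _ => ∑ i ∈ S, v i)
      = ∑ r ∈ Fintype.piFinset (fun _ : Fin k => S), B (fun t => v (r t)) := fun S =>
    B.toMultilinearMap.map_sum_finset (fun _ j => v j) (fun _ => S)
  have pifil : ∀ S : Finset (Fin k), Fintype.piFinset (fun _ : Fin k => S)
      = (Finset.univ : Finset (Fin k → Fin k)).filter (fun r => ∀ t, r t ∈ S) := by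
    intro S
    ext r
    simp [Fintype.mem_piFinset]
  calc
    ∑ S ∈ (Finset.univ : Finset (Fin k)).powerset,
        ((-1 : ℝ) ^ (k - S.card)) • B (fun _ => ∑ i ∈ S, v i)
      = ∑ S ∈ (Finset.univ : Finset (Fin k)).powerset,
          ∑ r ∈ (Finset.univ : Finset (Fin k → Fin k)),
            (if (∀ t, r t ∈ S) then ((-1 : ℝ) ^ (k - S.card)) else 0) • B (fun t => v (r t)) := by
        refine Finset.sum_congr rfl fun S _ => ?_
        rw [expand S, pifil S, Finset.smul_sum, Finset.sum_filter]
        refine Finset.sum_congr rfl fun r _ => ?_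
        split <;> simp
    _ = ∑ r ∈ (Finset.univ : Finset (Fin k → Fin k)),
          (∑ S ∈ (Finset.univ : Finset (Fin k)).powerset,
            if (∀ t, r t ∈ S) then ((-1 : ℝ) ^ (k - S.card)) else 0) • B (fun t => v (r t)) := by
        rw [Finset.sum_comm]
        exact Finset.sum_congr rfl fun r _ => by rw [Finset.sum_smul]
    _ = ∑ r ∈ (Finset.univ : Finset (Fin k → Fin k)),
          (if Function.Surjective r then (1 : ℝ) else 0) • B (fun t => v (r t)) := by
        exact Finset.sum_congr rfl fun r _ => by rw [coeff_sum r]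
    _ = ∑ r ∈ (Finset.univ : Finset (Fin k → Fin k)).filter (fun r => Function.Surjective r),
          B (fun t => v (r t)) := by
        rw [Finset.sum_filter]
        refine Finset.sum_congr rfl fun r _ => ?_
        split <;> simp
    _ = ∑ σ ∈ (Finset.univ : Finset (Equiv.Perm (Fin k))), B (fun t => v (σ t)) := by
        refine Finset.sum_bij' (fun r hr => Equiv.ofBijective r
            (Function.Surjective.bijective_of_finite (Finset.mem_filter.1 hr).2))
          (fun σ _ => ⇑σ) (fun r hr => Finset.mem_univ _) ?_ ?_ ?_ ?_
        · intro σ _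
          exact Finset.mem_filter.2 ⟨Finset.mem_univ _, σ.surjective⟩
        · intro r hr
          rfl
        · intro σ _
          ext t
          rfl
        · intro r hr
          rfl
    _ = ∑ σ ∈ (Finset.univ : Finset (Equiv.Perm (Fin k))), B v := by
        exact Finset.sum_congr rfl fun σ _ => hB σ v
    _ = ((Nat.factorial k : ℕ) : ℝ) • B v := by
        rw [Finset.sum_const, Finset.card_univ, Fintype.card_perm, Fintype.card_fin,
          ← Nat.cast_smul_eq_nsmul ℝ]

private lemma polar_bound {k : ℕ} (hk : 0 < k)
    (B : ContinuousMultilinearMap ℝ (fun _ : Fin k => E) F) (hB : PPV.IsSymm B)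
    {M R : ℝ} (hR : 0 ≤ R)
    (hM : ∀ w : E, ‖w‖ ≤ 1 → ‖B (fun _ => w)‖ ≤ M)
    (v : Fin k → E) (hv : ∀ i, ‖v i‖ ≤ R) :
    ‖B v‖ ≤ ((2 : ℝ) ^ k * (k : ℝ) ^ k / ((Nat.factorial k : ℕ) : ℝ)) * (M * R ^ k) := by
  have hM0 : (0 : ℝ) ≤ M := le_trans (norm_nonneg _) (hM 0 (by simp))
  have hdiag : ∀ w : E, ‖B (fun _ => w)‖ ≤ M * ‖w‖ ^ k := by
    intro w
    rcases eq_or_ne w 0 with rfl | hw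
    · have hz : B (fun _ => (0 : E)) = 0 := B.map_coord_zero (⟨0, hk⟩ : Fin k) rfl
      rw [hz, norm_zero, norm_zero, zero_pow hk.ne', mul_zero]
    · have hnw : (0 : ℝ) < ‖w‖ := norm_pos_iff.2 hw
      have key : B (fun _ => w) = (‖w‖ ^ k) • B (fun _ => ‖w‖⁻¹ • w) := by
        have := B.map_smul_univ (fun _ : Fin k => ‖w‖) (fun _ => ‖w‖⁻¹ • w)
        rw [Finset.prod_const, Finset.card_univ, Fintype.card_fin] at this
        rw [← this]
        congr 1
        funext t
        rw [smul_smul, mul_inv_cancel₀ hnw.ne', one_smul]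
      rw [key, norm_smul, norm_pow, norm_norm, mul_comm]
      have hu : ‖‖w‖⁻¹ • w‖ ≤ 1 := by
        rw [norm_smul, norm_inv, norm_norm, inv_mul_cancel₀ hnw.ne']
      exact mul_le_mul_of_nonneg_right (hM _ hu) (by positivity)
  have hid := polar_identity B hB v
  have hfac : (0 : ℝ) < ((Nat.factorial k : ℕ) : ℝ) := by exact_mod_cast Nat.factorial_pos k
  have hbound : ((Nat.factorial k : ℕ) : ℝ) * ‖B v‖ ≤ (2 : ℝ) ^ k * (M * ((k : ℝ) * R) ^ k) := by
    have h1 : ‖((Nat.factorial k : ℕ) : ℝ) • B v‖ = ((Nat.factorial k : ℕ) : ℝ) * ‖B v‖ := by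
      rw [norm_smul, Real.norm_eq_abs, abs_of_pos hfac]
    rw [← h1, ← hid]
    refine le_trans (norm_sum_le _ _) ?_
    have hterm : ∀ S ∈ (Finset.univ : Finset (Fin k)).powerset,
        ‖((-1 : ℝ) ^ (k - S.card)) • B (fun _ => ∑ i ∈ S, v i)‖ ≤ M * ((k : ℝ) * R) ^ k := by
      intro S _
      rw [norm_smul, Real.norm_eq_abs, abs_pow, abs_neg, abs_one, one_pow, one_mul]
      refine le_trans (hdiag _) ?_
      refine mul_le_mul_of_nonneg_left ?_ hM0
      refine pow_le_pow_left₀ (norm_nonneg _) ?_ k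
      refine le_trans (norm_sum_le _ _) ?_
      calc ∑ i ∈ S, ‖v i‖ ≤ ∑ _i ∈ S, R := Finset.sum_le_sum fun i _ => hv i
        _ = S.card * R := by rw [Finset.sum_const, nsmul_eq_mul]
        _ ≤ (k : ℝ) * R := by
            refine mul_le_mul_of_nonneg_right ?_ hR
            exact_mod_cast le_trans (Finset.card_le_univ S) (by simp)
    refine le_trans (Finset.sum_le_sum hterm) ?_
    rw [Finset.sum_const, nsmul_eq_mul, Finset.card_powerset, Finset.card_univ, Fintype.card_fin]
    push_cast
    exact le_rfl
  have : ‖B v‖ ≤ ((2 : ℝ) ^ k * (M * ((k : ℝ) * R) ^ k)) / ((Nat.factorial k : ℕ) : ℝ) :=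
    (le_div_iff₀' hfac).2 hbound
  refine le_trans this (le_of_eq ?_)
  rw [mul_pow]
  field_simp

private lemma compact_weak_norm_tendsto {G : Type*} [NormedAddCommGroup G] [NormedSpace ℝ G]
    (T : E →L[ℝ] G) (hK : IsCompact (closure ((fun z => T z) '' Metric.closedBall (0 : E) 1)))
    (l : Filter E) [hne : l.NeBot] {M : ℝ} (hMpos : 0 < M)
    (hb : ∀ᶠ z in l, z ∈ Metric.closedBall (0 : E) M) (x₀ : E)
    (hw : ∀ φ : E →L[ℝ] ℝ, Tendsto (fun z => φ z) l (nhds (φ x₀))) :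
    Tendsto (fun z => T z) l (nhds (T x₀)) := by
  set K : Set G := closure ((fun z => T z) '' Metric.closedBall (0 : E) 1) with hKdef
  set K' : Set G := (fun y => M • y) '' K with hK'def
  have hK'cpt : IsCompact K' := hK.image (continuous_const_smul M)
  have hmem : ∀ z ∈ Metric.closedBall (0 : E) M, T z ∈ K' := by
    intro z hz
    rw [Metric.mem_closedBall, dist_zero_right] at hz
    have h1 : M⁻¹ • z ∈ Metric.closedBall (0 : E) 1 := by
      rw [Metric.mem_closedBall, dist_zero_right, norm_smul, norm_inv, Real.norm_eq_abs,
        abs_of_pos hMpos]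
      calc M⁻¹ * ‖z‖ ≤ M⁻¹ * M := by
            exact mul_le_mul_of_nonneg_left hz (by positivity)
        _ = 1 := inv_mul_cancel₀ hMpos.ne'
    refine ⟨T (M⁻¹ • z), subset_closure ⟨M⁻¹ • z, h1, rfl⟩, ?_⟩
    show M • T (M⁻¹ • z) = T z
    rw [map_smul, smul_smul, mul_inv_cancel₀ hMpos.ne', one_smul]
  rw [tendsto_iff_ultrafilter]
  intro u hu
  have hle : ↑(u.map (fun z => T z)) ≤ Filter.principal K' := by
    rw [le_principal_iff]
    have hev : ∀ᶠ z in ↑u, z ∈ Metric.closedBall (0 : E) M := hu hb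
    exact Filter.mem_map.2 (Filter.Eventually.mono hev fun z hz => hmem z hz)
  obtain ⟨y, hyK, hy⟩ := hK'cpt.ultrafilter_le_nhds (u.map (fun z => T z)) hle
  have hyeq : y = T x₀ := by
    by_contra hne'
    obtain ⟨φ, hφ⟩ := SeparatingDual.exists_separating_of_ne (R := ℝ) hne'
    have h1 : Tendsto φ (↑(u.map (fun z => T z))) (nhds (φ y)) :=
      (φ.continuous.tendsto y).mono_left hy
    have h2 : Tendsto (fun z => φ (T z)) (↑u) (nhds (φ (T x₀))) :=
      (hw (φ.comp T)).mono_left hu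
    have h1' : Tendsto (fun z => φ (T z)) (↑u) (nhds (φ y)) := by
      rw [Ultrafilter.coe_map] at h1
      exact h1
    exact hφ (tendsto_nhds_unique h1' h2)
  have : Tendsto (fun z => T z) (↑u) (nhds y) := by
    rw [Ultrafilter.coe_map] at hy
    exact hy
  rwa [hyeq] at this

end Aux

theorem stmt3 (E F : Type*) [NormedAddCommGroup E] [NormedSpace ℝ E] [CompleteSpace E]
    [NormedAddCommGroup F] [NormedSpace ℝ F] [CompleteSpace F] (j : ℕ)
    (C : E →L[ℝ] polySet (j + 1) E F) (hsym : IsSymmOp C)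
    (hcpt : IsCompact (closure ((fun x => C x) '' Metric.closedBall (0 : E) 1))) :
    ∀ x : E, (C x : BoundedContinuousFunction (Ball E) F) ∈ polyWbSet (j + 1) E F := by
  classical
  intro x
  have hrep : ∀ z : E, ∃ A : ContinuousMultilinearMap ℝ (fun _ : Fin (j + 1) => E) F,
      Represents A ((C z : BoundedContinuousFunction (Ball E) F)) := fun z => (C z).2
  choose Arep hArep using hrep
  have swap : ∀ (z w : E) (v : Fin (j + 1) → E) (i : Fin (j + 1)),
      Arep z (Function.update v i w) = Arep w (Function.update v i z) :=
    fun z w v i => hsym z w (Arep z) (Arep w) (hArep z) (hArep w) v i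
  refine ⟨Arep x, hArep x, ?_⟩
  intro S hS
  obtain ⟨M₀, hM₀⟩ := hS.subset_closedBall (0 : E)
  set M : ℝ := max M₀ 1 with hMdef
  have hM1 : (0 : ℝ) < M := lt_of_lt_of_le one_pos (le_max_right _ _)
  have hSM : S ⊆ Metric.closedBall (0 : E) M :=
    hM₀.trans (Metric.closedBall_subset_closedBall (le_max_left _ _))
  set R : ℝ := max M ‖x‖ with hRdef
  have hR0 : (0 : ℝ) ≤ R := le_trans hM1.le (le_max_left _ _)
  set c1 : ℝ := (2 : ℝ) ^ (j + 1) * (((j + 1 : ℕ)) : ℝ) ^ (j + 1) / ((Nat.factorial (j + 1) : ℕ) : ℝ) with hc1def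
  set Ck : ℝ := (((j + 1 : ℕ)) : ℝ) * c1 * R ^ (j + 1) with hCkdef
  have key : ∀ z ∈ Metric.closedBall (0 : E) M, ∀ x₀ ∈ Metric.closedBall (0 : E) M,
      ‖Arep x (fun _ => z) - Arep x (fun _ => x₀)‖ ≤ Ck * ‖C z - C x₀‖ := by
    intro z hz x₀ hx₀
    rw [Metric.mem_closedBall, dist_zero_right] at hz hx₀
    set g : ℕ → F := fun i => Arep x (fun t : Fin (j + 1) => if (t : ℕ) < i then z else x₀) with hgdef
    have hg0 : g 0 = Arep x (fun _ => x₀) := by simp [hgdef]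
    have hgk : g (j + 1) = Arep x (fun _ => z) := by
      simp only [hgdef]
      congr 1
      funext t
      simp [t.isLt]
    have tele : Arep x (fun _ => z) - Arep x (fun _ => x₀)
        = ∑ i ∈ Finset.range (j + 1), (g (i + 1) - g i) := by
      rw [Finset.sum_range_sub, hg0, hgk]
    rw [tele]
    refine le_trans (norm_sum_le _ _) ?_
    have hterm : ∀ i ∈ Finset.range (j + 1),
        ‖g (i + 1) - g i‖ ≤ c1 * (‖C z - C x₀‖ * R ^ (j + 1)) := by
      intro i hi
      rw [Finset.mem_range] at hi
      set ι : Fin (j + 1) := ⟨i, hi⟩ with hιdef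
      set u : Fin (j + 1) → E := fun t => if (t : ℕ) < i then z else x₀ with hudef
      have e1 : (fun t : Fin (j + 1) => if (t : ℕ) < i + 1 then z else x₀)
          = Function.update u ι z := by
        funext t
        by_cases h : t = ι
        · subst h
          simp [hιdef]
        · rw [Function.update_of_ne h]
          have hti : (t : ℕ) ≠ i := fun hc => h (Fin.ext hc)
          by_cases h' : (t : ℕ) < i
          · simp [hudef, h', Nat.lt_succ_of_lt h']
          · have h'' : ¬ (t : ℕ) < i + 1 := by omega
            simp [hudef, h', h'']
      have e2 : u = Function.update u ι x₀ := by
        funext t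
        by_cases h : t = ι
        · subst h
          simp [hudef, hιdef]
        · rw [Function.update_of_ne h]
      have hdiff : g (i + 1) - g i
          = Arep z (Function.update u ι x) - Arep x₀ (Function.update u ι x) := by
        have h1 : g (i + 1) = Arep z (Function.update u ι x) := by
          show Arep x (fun t : Fin (j + 1) => if (t : ℕ) < i + 1 then z else x₀) = _
          rw [e1, swap x z u ι]
        have h2 : g i = Arep x₀ (Function.update u ι x) := by
          show Arep x u = _
          conv_lhs => rw [e2]
          rw [swap x x₀ u ι]
        rw [h1, h2]
      set B : ContinuousMultilinearMap ℝ (fun _ : Fin (j + 1) => E) F := Arep z - Arep x₀ with hBdef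
      have hBsym : PPV.IsSymm B := by
        intro σ v
        simp only [hBdef, ContinuousMultilinearMap.sub_apply]
        rw [(hArep z).1 σ v, (hArep x₀).1 σ v]
      have hdiagB : ∀ w : E, ‖w‖ ≤ 1 → ‖B (fun _ => w)‖ ≤ ‖C z - C x₀‖ := by
        intro w hw
        have hwball : w ∈ Ball E := by
          rw [Metric.mem_closedBall, dist_zero_right]
          exact hw
        have hz' := (hArep z).2 ⟨w, hwball⟩
        have hx' := (hArep x₀).2 ⟨w, hwball⟩
        have hBw : B (fun _ => w)
            = ((C z - C x₀ : polySet (j + 1) E F) : BoundedContinuousFunction (Ball E) F)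
                ⟨w, hwball⟩ := by
          simp only [hBdef, ContinuousMultilinearMap.sub_apply]
          rw [← hz', ← hx']
          simp
        rw [hBw]
        refine le_trans (BoundedContinuousFunction.norm_coe_le_norm _ _) ?_
        exact le_of_eq rfl
      have hv : ∀ t : Fin (j + 1), ‖Function.update u ι x t‖ ≤ R := by
        intro t
        rcases eq_or_ne t ι with rfl | h
        · rw [Function.update_self]
          exact le_max_right _ _
        · rw [Function.update_of_ne h]
          by_cases h' : (t : ℕ) < i
          · simp only [hudef, if_pos h']
            exact le_trans hz (le_max_left _ _)
          · simp only [hudef, if_neg h']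
            exact le_trans hx₀ (le_max_left _ _)
      have hbd := polar_bound (by omega) B hBsym hR0 hdiagB (Function.update u ι x) hv
      rw [hdiff]
      have hBapp : B (Function.update u ι x)
          = Arep z (Function.update u ι x) - Arep x₀ (Function.update u ι x) := by
        simp [hBdef]
      rw [← hBapp]
      exact hbd
    refine le_trans (Finset.sum_le_sum hterm) ?_
    rw [Finset.sum_const, Finset.card_range, nsmul_eq_mul]
    refine le_of_eq ?_
    rw [hCkdef, hc1def]
    push_cast
    ring
  intro a ha
  obtain ⟨x₀, hx₀S, rfl⟩ := ha
  have hx₀M : x₀ ∈ Metric.closedBall (0 : E) M := hSM hx₀S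
  set l : Filter E := Filter.map (toWeakSpace ℝ E).symm
      (nhdsWithin (toWeakSpace ℝ E x₀) (toWeakSpace ℝ E '' S)) with hldef
  have hlne : l.NeBot := by
    have h0 : (nhdsWithin (toWeakSpace ℝ E x₀) (toWeakSpace ℝ E '' S)).NeBot :=
      nhdsWithin_neBot_of_mem (Set.mem_image_of_mem _ hx₀S)
    exact Filter.NeBot.map h0 _
  have hb : ∀ᶠ z in l, z ∈ Metric.closedBall (0 : E) M := by
    rw [hldef, Filter.eventually_map]
    filter_upwards [self_mem_nhdsWithin] with ξ hξ
    obtain ⟨s, hsS, rfl⟩ := hξ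
    rw [LinearEquiv.symm_apply_apply]
    exact hSM hsS
  have hw : ∀ φ : E →L[ℝ] ℝ, Tendsto (fun z => φ z) l (nhds (φ x₀)) := by
    intro φ
    rw [hldef, Filter.tendsto_map'_iff]
    have hcont : Continuous fun ξ : WeakSpace ℝ E => φ ((toWeakSpace ℝ E).symm ξ) :=
      WeakBilin.eval_continuous ((topDualPairing ℝ E).flip) φ
    have h0 : φ ((toWeakSpace ℝ E).symm (toWeakSpace ℝ E x₀)) = φ x₀ := by
      rw [LinearEquiv.symm_apply_apply]
    exact h0 ▸ (hcont.tendsto _).mono_left nhdsWithin_le_nhds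
  haveI := hlne
  have hC : Tendsto (fun z => C z) l (nhds (C x₀)) :=
    compact_weak_norm_tendsto C hcpt l hM1 hb x₀ hw
  have main : Tendsto (fun z : E => Arep x (fun _ => z)) l (nhds (Arep x (fun _ => x₀))) := by
    rw [tendsto_iff_norm_sub_tendsto_zero]
    have hCz : Tendsto (fun z => ‖C z - C x₀‖) l (nhds 0) := by
      rw [tendsto_iff_norm_sub_tendsto_zero] at hC
      exact hC
    have hquot : Tendsto (fun z => Ck * ‖C z - C x₀‖) l (nhds 0) := by
      have h0 := hCz.const_mul Ck
      rwa [mul_zero] at h0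
    refine squeeze_zero' (Filter.Eventually.of_forall fun z => norm_nonneg _) ?_ hquot
    filter_upwards [hb] with z hz
    exact key z hz x₀ hx₀M
  have hfin : Tendsto ((fun z : E => Arep x (fun _ => z)) ∘ (toWeakSpace ℝ E).symm)
      (nhdsWithin (toWeakSpace ℝ E x₀) (toWeakSpace ℝ E '' S))
      (nhds (Arep x (fun _ => x₀))) := Filter.tendsto_map'_iff.1 main
  exact hfin

end Stmts
end
end

section
/- Let 1 < p, q < ∞ and k ≥ 2 with kq > p. Define J : ℓ∞ → P(^kℓ_p, ℓ_q) by J(ξ)(x) = (ξ_i x_i^k)_{i=1}^∞ for ξ = (ξ_i) ∈ ℓ∞ and x = (x_i) ∈ ℓ_p. Then J is a well-defined linear isometric embedding: for every ξ ∈ ℓ∞, J(ξ) is a continuous k-homogeneous polynomial from ℓ_p into ℓ_q and ‖J(ξ)‖ = ‖ξ‖_∞. In particular, P(^kℓ_p,ℓ_q) contains an isometric copy of ℓ∞. -/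
noncomputable section

open Metric Filter Topology
open scoped ENNReal NNReal

namespace Stmts
open PPV Metric Filter Topology
open scoped ENNReal NNReal

namespace Stmt17Aux
open PPV

variable (p q : ℝ≥0∞) [Fact (1 ≤ p)] [Fact (1 ≤ q)] (k : ℕ)

/-- The raw sequence underlying the multilinear map associated to `J ξ`. -/
def raw (ξ : Linf) (v : Fin k → Lp' p) : ℕ → ℝ := fun i => ξ i * ∏ m, v m i

variable {p q k}

lemma raw_bound (hQ : 0 < q.toReal) (hk : k ≠ 0) (ξ : Linf) (v : Fin k → Lp' p) (i : ℕ) :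
    ‖raw p k ξ v i‖ ^ q.toReal
      ≤ ‖ξ‖ ^ q.toReal * ∑ m, ‖v m i‖ ^ ((k : ℝ) * q.toReal) := by
  obtain ⟨m₀, -, hm₀⟩ := Finset.exists_max_image Finset.univ (fun m => ‖v m i‖)
    ⟨⟨0, Nat.pos_of_ne_zero hk⟩, Finset.mem_univ _⟩
  have h0 : ‖raw p k ξ v i‖ ≤ ‖ξ‖ * ‖v m₀ i‖ ^ k := by
    have h1 : ∏ m, ‖v m i‖ ≤ ‖v m₀ i‖ ^ k := by
      calc ∏ m, ‖v m i‖ ≤ ∏ _m : Fin k, ‖v m₀ i‖ :=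
            Finset.prod_le_prod (fun _ _ => norm_nonneg _) (fun m _ => hm₀ m (Finset.mem_univ _))
        _ = ‖v m₀ i‖ ^ k := by simp
    calc ‖raw p k ξ v i‖ = ‖ξ i‖ * ∏ m, ‖v m i‖ := by
          rw [raw, norm_mul, norm_prod]
      _ ≤ ‖ξ‖ * ‖v m₀ i‖ ^ k := by
          apply mul_le_mul (lp.norm_apply_le_norm ENNReal.top_ne_zero ξ i) h1
            (Finset.prod_nonneg fun _ _ => norm_nonneg _) (norm_nonneg _)
  calc ‖raw p k ξ v i‖ ^ q.toReal ≤ (‖ξ‖ * ‖v m₀ i‖ ^ k) ^ q.toReal :=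
        Real.rpow_le_rpow (norm_nonneg _) h0 hQ.le
    _ = ‖ξ‖ ^ q.toReal * ‖v m₀ i‖ ^ ((k : ℝ) * q.toReal) := by
        rw [Real.mul_rpow (norm_nonneg _) (by positivity),
          ← Real.rpow_natCast ‖v m₀ i‖ k, ← Real.rpow_mul (norm_nonneg _)]
    _ ≤ ‖ξ‖ ^ q.toReal * ∑ m, ‖v m i‖ ^ ((k : ℝ) * q.toReal) := by
        refine mul_le_mul_of_nonneg_left ?_ (by positivity)
        exact Finset.single_le_sum (f := fun m => ‖v m i‖ ^ ((k : ℝ) * q.toReal)) (fun m _ => by positivity) (Finset.mem_univ m₀)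

lemma summable_pow (hQ : 0 < q.toReal) (hk : k ≠ 0) (hpq : p ≤ (k : ℝ≥0∞) * q)
    (x : Lp' p) : Summable fun i => ‖x i‖ ^ ((k : ℝ) * q.toReal) := by
  have h := ((lp.memℓp x).of_exponent_ge hpq).summable
    (by rw [ENNReal.toReal_mul, ENNReal.toReal_natCast]
        exact mul_pos (by exact_mod_cast Nat.pos_of_ne_zero hk) hQ)
  simpa [ENNReal.toReal_mul] using h

lemma mem_raw (hQ : 0 < q.toReal) (hk : k ≠ 0) (hpq : p ≤ (k : ℝ≥0∞) * q)
    (ξ : Linf) (v : Fin k → Lp' p) : Memℓp (raw p k ξ v) q :=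
  memℓp_gen <| Summable.of_nonneg_of_le (fun i => by positivity)
    (fun i => raw_bound hQ hk ξ v i)
    ((summable_sum fun m _ => summable_pow hQ hk hpq (v m)).mul_left _)

variable (hQ : 0 < q.toReal) (hk : k ≠ 0) (hpq : p ≤ (k : ℝ≥0∞) * q)

/-- The multilinear map associated to `J ξ`. -/
def preA (ξ : Linf) : MultilinearMap ℝ (fun _ : Fin k => Lp' p) (Lp' q) where
  toFun v := ⟨raw p k ξ v, mem_raw hQ hk hpq ξ v⟩
  map_update_add' := by
    intro dec v i x y
    ext j
    have key : ∀ z : Lp' p, (∏ m, (Function.update v i z m) j)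
        = (z j) * ∏ m ∈ Finset.univ \ {i}, v m j := by
      intro z
      rw [Finset.prod_congr rfl fun m _ =>
        Function.apply_update (fun _ (w : Lp' p) => w j) v i z m,
        Finset.prod_update_of_mem (Finset.mem_univ i)]
    simp only [lp.coeFn_add, Pi.add_apply]
    show raw p k ξ (Function.update v i (x + y)) j
      = raw p k ξ (Function.update v i x) j + raw p k ξ (Function.update v i y) j
    simp only [raw, key, lp.coeFn_add, Pi.add_apply]
    ring
  map_update_smul' := by
    intro dec v i c x
    ext j
    have key : ∀ z : Lp' p, (∏ m, (Function.update v i z m) j)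
        = (z j) * ∏ m ∈ Finset.univ \ {i}, v m j := by
      intro z
      rw [Finset.prod_congr rfl fun m _ =>
        Function.apply_update (fun _ (w : Lp' p) => w j) v i z m,
        Finset.prod_update_of_mem (Finset.mem_univ i)]
    simp only [lp.coeFn_smul, Pi.smul_apply, smul_eq_mul]
    show raw p k ξ (Function.update v i (c • x)) j = c * raw p k ξ (Function.update v i x) j
    simp only [raw, key, lp.coeFn_smul, Pi.smul_apply, smul_eq_mul]
    ring

lemma norm_preA_le_of_unit (hQ : 0 < q.toReal) (hk : k ≠ 0) (hpq : p ≤ (k : ℝ≥0∞) * q)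
    (hP : 0 < p.toReal) (hp0 : p ≠ 0) (hPK : p.toReal ≤ (k : ℝ) * q.toReal)
    (hQ1 : 1 ≤ q.toReal) (ξ : Linf) (v : Fin k → Lp' p) (hv : ∀ m, ‖v m‖ ≤ 1) :
    ‖preA hQ hk hpq ξ v‖ ≤ ‖ξ‖ * k := by
  apply lp.norm_le_of_tsum_le hQ (by positivity)
  show ∑' i, ‖raw p k ξ v i‖ ^ q.toReal ≤ (‖ξ‖ * (k : ℝ)) ^ q.toReal
  have hsum1 : Summable fun i => ‖raw p k ξ v i‖ ^ q.toReal :=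
    (mem_raw hQ hk hpq ξ v).summable hQ
  have hsum2 : Summable fun i => ‖ξ‖ ^ q.toReal * ∑ m, ‖v m i‖ ^ ((k : ℝ) * q.toReal) :=
    (summable_sum fun m _ => summable_pow hQ hk hpq (v m)).mul_left _
  calc ∑' i, ‖raw p k ξ v i‖ ^ q.toReal
      ≤ ∑' i, ‖ξ‖ ^ q.toReal * ∑ m, ‖v m i‖ ^ ((k : ℝ) * q.toReal) :=
        Summable.tsum_le_tsum (fun i => raw_bound hQ hk ξ v i) hsum1 hsum2
    _ = ‖ξ‖ ^ q.toReal * ∑ m, ∑' i, ‖v m i‖ ^ ((k : ℝ) * q.toReal) := by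
        rw [tsum_mul_left, Summable.tsum_finsetSum (fun m _ => summable_pow hQ hk hpq (v m))]
    _ ≤ ‖ξ‖ ^ q.toReal * ∑ _m : Fin k, (1 : ℝ) := by
        refine mul_le_mul_of_nonneg_left (Finset.sum_le_sum fun m _ => ?_) (by positivity)
        calc ∑' i, ‖v m i‖ ^ ((k : ℝ) * q.toReal) ≤ ∑' i, ‖v m i‖ ^ p.toReal := by
              refine Summable.tsum_le_tsum (fun i => ?_) (summable_pow hQ hk hpq (v m))
                ((lp.memℓp (v m)).summable hP)
              exact Real.rpow_le_rpow_of_exponent_ge' (norm_nonneg _)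
                ((lp.norm_apply_le_norm hp0 (v m) i).trans (hv m)) hP.le hPK
          _ = ‖v m‖ ^ p.toReal := (lp.norm_rpow_eq_tsum hP (v m)).symm
          _ ≤ 1 := Real.rpow_le_one (norm_nonneg _) (hv m) hP.le
    _ = ‖ξ‖ ^ q.toReal * (k : ℝ) := by
        rw [Finset.sum_const, Finset.card_univ, Fintype.card_fin, nsmul_eq_mul, mul_one]
    _ ≤ ‖ξ‖ ^ q.toReal * (k : ℝ) ^ q.toReal := by
        refine mul_le_mul_of_nonneg_left ?_ (by positivity)
        calc (k : ℝ) = (k : ℝ) ^ (1 : ℝ) := (Real.rpow_one _).symm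
          _ ≤ (k : ℝ) ^ q.toReal := Real.rpow_le_rpow_of_exponent_le
              (by exact_mod_cast Nat.one_le_iff_ne_zero.mpr hk) hQ1
    _ = (‖ξ‖ * (k : ℝ)) ^ q.toReal := (Real.mul_rpow (norm_nonneg _) (by positivity)).symm

lemma norm_preA_le (hQ : 0 < q.toReal) (hk : k ≠ 0) (hpq : p ≤ (k : ℝ≥0∞) * q)
    (hP : 0 < p.toReal) (hp0 : p ≠ 0) (hPK : p.toReal ≤ (k : ℝ) * q.toReal)
    (hQ1 : 1 ≤ q.toReal) (ξ : Linf) (v : Fin k → Lp' p) :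
    ‖preA hQ hk hpq ξ v‖ ≤ (‖ξ‖ * k) * ∏ m, ‖v m‖ := by
  by_cases h : ∃ m, v m = 0
  · obtain ⟨m, hm⟩ := h
    rw [(preA hQ hk hpq ξ).map_coord_zero m hm, norm_zero]
    positivity
  · push_neg at h
    set w : Fin k → Lp' p := fun m => ‖v m‖⁻¹ • v m with hw
    have hw1 : ∀ m, ‖w m‖ ≤ 1 := fun m => by
      rw [hw]
      simp only [norm_smul, norm_inv, norm_norm]
      rw [inv_mul_cancel₀ (norm_ne_zero_iff.mpr (h m))]
    have hv : v = fun m => ‖v m‖ • w m :=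
      funext fun m => (smul_inv_smul₀ (norm_ne_zero_iff.mpr (h m)) _).symm
    calc ‖preA hQ hk hpq ξ v‖ = ‖(∏ m, ‖v m‖) • preA hQ hk hpq ξ w‖ := by
          conv_lhs => rw [hv]
          rw [MultilinearMap.map_smul_univ]
      _ = (∏ m, ‖v m‖) * ‖preA hQ hk hpq ξ w‖ := by
          rw [norm_smul, Real.norm_eq_abs,
            abs_of_nonneg (Finset.prod_nonneg fun _ _ => norm_nonneg _)]
      _ ≤ (∏ m, ‖v m‖) * (‖ξ‖ * k) :=
          mul_le_mul_of_nonneg_left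
            (norm_preA_le_of_unit hQ hk hpq hP hp0 hPK hQ1 ξ w hw1)
            (Finset.prod_nonneg fun _ _ => norm_nonneg _)
      _ = (‖ξ‖ * k) * ∏ m, ‖v m‖ := mul_comm _ _

/-- The continuous multilinear map associated to `J ξ`. -/
def Acont (hQ : 0 < q.toReal) (hk : k ≠ 0) (hpq : p ≤ (k : ℝ≥0∞) * q)
    (hP : 0 < p.toReal) (hp0 : p ≠ 0) (hPK : p.toReal ≤ (k : ℝ) * q.toReal)
    (hQ1 : 1 ≤ q.toReal) (ξ : Linf) :
    ContinuousMultilinearMap ℝ (fun _ : Fin k => Lp' p) (Lp' q) :=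
  (preA hQ hk hpq ξ).mkContinuous (‖ξ‖ * k) (norm_preA_le hQ hk hpq hP hp0 hPK hQ1 ξ)

lemma diag_apply (ξ : Linf) (y : Lp' p) (i : ℕ) :
    raw p k ξ (fun _ => y) i = ξ i * (y i) ^ k := by
  simp only [raw]
  rw [Finset.prod_const, Finset.card_univ, Fintype.card_fin]

lemma diag_norm_le (hQ : 0 < q.toReal) (hk : k ≠ 0) (hpq : p ≤ (k : ℝ≥0∞) * q)
    (hP : 0 < p.toReal) (hp0 : p ≠ 0) (hPK : p.toReal ≤ (k : ℝ) * q.toReal)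
    (hQ1 : 1 ≤ q.toReal) (ξ : Linf) (y : Lp' p) (hy : ‖y‖ ≤ 1) :
    ‖Acont hQ hk hpq hP hp0 hPK hQ1 ξ (fun _ => y)‖ ≤ ‖ξ‖ := by
  apply lp.norm_le_of_tsum_le hQ (norm_nonneg ξ)
  show ∑' i, ‖raw p k ξ (fun _ => y) i‖ ^ q.toReal ≤ ‖ξ‖ ^ q.toReal
  have key : ∀ i, ‖raw p k ξ (fun _ => y) i‖ ^ q.toReal
      ≤ ‖ξ‖ ^ q.toReal * ‖y i‖ ^ p.toReal := by
    intro i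
    have h1 : ‖raw p k ξ (fun _ => y) i‖ ≤ ‖ξ‖ * ‖y i‖ ^ k := by
      rw [diag_apply, norm_mul, norm_pow]
      exact mul_le_mul_of_nonneg_right (lp.norm_apply_le_norm ENNReal.top_ne_zero ξ i)
        (by positivity)
    calc ‖raw p k ξ (fun _ => y) i‖ ^ q.toReal ≤ (‖ξ‖ * ‖y i‖ ^ k) ^ q.toReal :=
          Real.rpow_le_rpow (norm_nonneg _) h1 hQ.le
      _ = ‖ξ‖ ^ q.toReal * ‖y i‖ ^ ((k : ℝ) * q.toReal) := by
          rw [Real.mul_rpow (norm_nonneg _) (by positivity),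
            ← Real.rpow_natCast ‖y i‖ k, ← Real.rpow_mul (norm_nonneg _)]
      _ ≤ ‖ξ‖ ^ q.toReal * ‖y i‖ ^ p.toReal := by
          refine mul_le_mul_of_nonneg_left ?_ (by positivity)
          exact Real.rpow_le_rpow_of_exponent_ge' (norm_nonneg _)
            ((lp.norm_apply_le_norm hp0 y i).trans hy) hP.le hPK
  have hs1 : Summable fun i => ‖raw p k ξ (fun _ => y) i‖ ^ q.toReal :=
    (mem_raw hQ hk hpq ξ _).summable hQ
  have hs2 : Summable fun i => ‖ξ‖ ^ q.toReal * ‖y i‖ ^ p.toReal :=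
    ((lp.memℓp y).summable hP).mul_left _
  calc ∑' i, ‖raw p k ξ (fun _ => y) i‖ ^ q.toReal
      ≤ ∑' i, ‖ξ‖ ^ q.toReal * ‖y i‖ ^ p.toReal := Summable.tsum_le_tsum key hs1 hs2
    _ = ‖ξ‖ ^ q.toReal * ‖y‖ ^ p.toReal := by rw [tsum_mul_left, ← lp.norm_rpow_eq_tsum hP]
    _ ≤ ‖ξ‖ ^ q.toReal * 1 := by
        refine mul_le_mul_of_nonneg_left ?_ (by positivity)
        exact Real.rpow_le_one (norm_nonneg _) hy hP.le
    _ = ‖ξ‖ ^ q.toReal := mul_one _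

/-- The bounded continuous function on the unit ball representing `J ξ`. -/
def poly (hQ : 0 < q.toReal) (hk : k ≠ 0) (hpq : p ≤ (k : ℝ≥0∞) * q)
    (hP : 0 < p.toReal) (hp0 : p ≠ 0) (hPK : p.toReal ≤ (k : ℝ) * q.toReal)
    (hQ1 : 1 ≤ q.toReal) (ξ : Linf) :
    BoundedContinuousFunction (Ball (Lp' p)) (Lp' q) :=
  BoundedContinuousFunction.ofNormedAddCommGroup
    (fun y => Acont hQ hk hpq hP hp0 hPK hQ1 ξ (fun _ => (y : Lp' p)))
    ((Acont hQ hk hpq hP hp0 hPK hQ1 ξ).cont.comp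
      (continuous_pi fun _ => continuous_subtype_val))
    ‖ξ‖ (fun y => diag_norm_le hQ hk hpq hP hp0 hPK hQ1 ξ y (mem_closedBall_zero_iff.mp y.2))

lemma poly_mem (hQ : 0 < q.toReal) (hk : k ≠ 0) (hpq : p ≤ (k : ℝ≥0∞) * q)
    (hP : 0 < p.toReal) (hp0 : p ≠ 0) (hPK : p.toReal ≤ (k : ℝ) * q.toReal)
    (hQ1 : 1 ≤ q.toReal) (ξ : Linf) :
    poly hQ hk hpq hP hp0 hPK hQ1 ξ ∈ polySet k (Lp' p) (Lp' q) := by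
  refine ⟨Acont hQ hk hpq hP hp0 hPK hQ1 ξ, ⟨?_, fun y => rfl⟩⟩
  intro σ v
  ext j
  show raw p k ξ (fun i => v (σ i)) j = raw p k ξ v j
  simp only [raw]
  congr 1
  exact Equiv.prod_comp σ fun m => v m j

/-- The isometric embedding `J`. -/
def Jmap (hQ : 0 < q.toReal) (hk : k ≠ 0) (hpq : p ≤ (k : ℝ≥0∞) * q)
    (hP : 0 < p.toReal) (hp0 : p ≠ 0) (hPK : p.toReal ≤ (k : ℝ) * q.toReal)
    (hQ1 : 1 ≤ q.toReal) : Linf →ₗ[ℝ] polySet k (Lp' p) (Lp' q) where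
  toFun ξ := ⟨poly hQ hk hpq hP hp0 hPK hQ1 ξ, poly_mem hQ hk hpq hP hp0 hPK hQ1 ξ⟩
  map_add' ξ η := by
    apply Subtype.ext
    ext y j
    show raw p k (ξ + η) (fun _ => (y : Lp' p)) j
      = raw p k ξ (fun _ => (y : Lp' p)) j + raw p k η (fun _ => (y : Lp' p)) j
    simp only [raw, lp.coeFn_add, Pi.add_apply]
    ring
  map_smul' c ξ := by
    apply Subtype.ext
    ext y j
    show raw p k (c • ξ) (fun _ => (y : Lp' p)) j = c * raw p k ξ (fun _ => (y : Lp' p)) j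
    simp only [raw, lp.coeFn_smul, Pi.smul_apply, smul_eq_mul]
    ring

lemma norm_poly (hQ : 0 < q.toReal) (hk : k ≠ 0) (hpq : p ≤ (k : ℝ≥0∞) * q)
    (hP : 0 < p.toReal) (hp0 : p ≠ 0) (hq0 : q ≠ 0)
    (hPK : p.toReal ≤ (k : ℝ) * q.toReal) (hQ1 : 1 ≤ q.toReal) (ξ : Linf) :
    ‖poly hQ hk hpq hP hp0 hPK hQ1 ξ‖ = ‖ξ‖ := by
  apply le_antisymm
  · refine (BoundedContinuousFunction.norm_le (norm_nonneg ξ)).mpr fun y => ?_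
    exact diag_norm_le hQ hk hpq hP hp0 hPK hQ1 ξ y (mem_closedBall_zero_iff.mp y.2)
  · rw [show ‖ξ‖ = ⨆ i, ‖ξ i‖ from lp.norm_eq_ciSup ξ]
    apply ciSup_le
    intro n
    have hen : ‖lp.single (E := fun _ : ℕ => ℝ) p n (1 : ℝ)‖ = 1 := by
      simpa using lp.norm_single (E := fun _ : ℕ => ℝ) (pos_iff_ne_zero.mpr hp0) n (1 : ℝ)
    have hmem : lp.single (E := fun _ : ℕ => ℝ) p n (1 : ℝ) ∈ Ball (Lp' p) := mem_closedBall_zero_iff.mpr hen.le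
    have hval : (poly hQ hk hpq hP hp0 hPK hQ1 ξ ⟨lp.single (E := fun _ : ℕ => ℝ) p n (1 : ℝ), hmem⟩ : Lp' q) n
        = ξ n := by
      show raw p k ξ (fun _ => lp.single (E := fun _ : ℕ => ℝ) p n (1 : ℝ)) n = ξ n
      rw [diag_apply, lp.single_apply_self]
      norm_num
    calc ‖ξ n‖ = ‖(poly hQ hk hpq hP hp0 hPK hQ1 ξ ⟨lp.single (E := fun _ : ℕ => ℝ) p n (1 : ℝ), hmem⟩ : Lp' q) n‖ :=
          by rw [hval]
      _ ≤ ‖poly hQ hk hpq hP hp0 hPK hQ1 ξ ⟨lp.single (E := fun _ : ℕ => ℝ) p n (1 : ℝ), hmem⟩‖ :=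
          lp.norm_apply_le_norm hq0 _ n
      _ ≤ ‖poly hQ hk hpq hP hp0 hPK hQ1 ξ‖ :=
          BoundedContinuousFunction.norm_coe_le_norm _ _

end Stmt17Aux

theorem stmt17 (p q : ℝ≥0∞) [Fact (1 ≤ p)] [Fact (1 ≤ q)]
    (hp : 1 < p) (hp' : p ≠ ⊤) (hq : 1 < q) (hq' : q ≠ ⊤)
    (j : ℕ) (hkq : p < (j + 2 : ℝ≥0∞) * q) :
    ∃ J : Linf →ₗ[ℝ] polySet (j + 2) (Lp' p) (Lp' q),
      (∀ (ξ : Linf) (y : Ball (Lp' p)) (i : ℕ),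
        (J ξ : BoundedContinuousFunction (Ball (Lp' p)) (Lp' q)) y i
          = ξ i * ((y : Lp' p) i) ^ (j + 2)) ∧
      ∀ ξ : Linf, ‖J ξ‖ = ‖ξ‖ := by
  have hp0 : p ≠ 0 := (lt_of_lt_of_le zero_lt_one (Fact.out : 1 ≤ p)).ne'
  have hq0 : q ≠ 0 := (lt_of_lt_of_le zero_lt_one (Fact.out : 1 ≤ q)).ne'
  have hP : 0 < p.toReal := ENNReal.toReal_pos hp0 hp'
  have hQ : 0 < q.toReal := ENNReal.toReal_pos hq0 hq'
  have hQ1 : 1 ≤ q.toReal := by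
    have h := ENNReal.toReal_mono hq' hq.le
    simpa using h
  have hk : j + 2 ≠ 0 := by omega
  have hcast : ((j + 2 : ℕ) : ℝ≥0∞) = (j : ℝ≥0∞) + 2 := by push_cast; ring
  have hpq : p ≤ ((j + 2 : ℕ) : ℝ≥0∞) * q := by rw [hcast]; exact hkq.le
  have hPK : p.toReal ≤ ((j + 2 : ℕ) : ℝ) * q.toReal := by
    have h1 : (((j + 2 : ℕ) : ℝ≥0∞) * q).toReal = ((j + 2 : ℕ) : ℝ) * q.toReal := by
      rw [ENNReal.toReal_mul, ENNReal.toReal_natCast]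
    calc p.toReal ≤ (((j + 2 : ℕ) : ℝ≥0∞) * q).toReal :=
          ENNReal.toReal_mono (ENNReal.mul_ne_top (ENNReal.natCast_ne_top _) hq') hpq
      _ = _ := h1
  refine ⟨Stmt17Aux.Jmap hQ hk hpq hP hp0 hPK hQ1, fun ξ y i => ?_, fun ξ => ?_⟩
  · show Stmt17Aux.raw p (j + 2) ξ (fun _ => (y : Lp' p)) i = _
    rw [Stmt17Aux.diag_apply]
  · exact Stmt17Aux.norm_poly hQ hk hpq hP hp0 hq0 hPK hQ1 ξ


end Stmts
end
end

section
/- Let 1 < p, q < ∞ and k ≥ 1. Then the space P_wb(^kℓ_p,ℓ_q) is separable; in particular, it contains no copy of ℓ∞. -/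
noncomputable section

open Metric Filter Topology
open scoped ENNReal NNReal

namespace Wk

noncomputable def ind (S : Set ℕ) : lp (fun _ : ℕ => ℝ) ⊤ :=
  ⟨S.indicator (fun _ => (1:ℝ)),
   memℓp_infty ⟨1, by rintro x ⟨n, rfl⟩; dsimp
                      by_cases h : n ∈ S <;> simp [Set.indicator, h]⟩⟩

lemma one_le_dist_ind {S T : Set ℕ} (h : S ≠ T) : 1 ≤ dist (ind S) (ind T) := by
  obtain ⟨n, hn⟩ : ∃ n, (n ∈ S ∧ n ∉ T) ∨ (n ∈ T ∧ n ∉ S) := by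
    by_contra hc
    push_neg at hc
    refine h (Set.ext fun n => ⟨fun hs => ?_, fun ht => ?_⟩)
    · exact (hc n).1 hs
    · exact (hc n).2 ht
  rw [dist_eq_norm]
  have h2 := lp.norm_apply_le_norm (p := (⊤ : ℝ≥0∞)) (by simp) (ind S - ind T) n
  refine le_trans ?_ h2
  have h3 : (ind S - ind T : lp (fun _ : ℕ => ℝ) ⊤) n = ind S n - ind T n := by
    simp [lp.coeFn_sub]
  rw [h3]
  have hS : (ind S : ∀ _ : ℕ, ℝ) n = S.indicator (fun _ => (1:ℝ)) n := rfl
  have hT : (ind T : ∀ _ : ℕ, ℝ) n = T.indicator (fun _ => (1:ℝ)) n := rfl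
  rw [hS, hT]
  rcases hn with ⟨h1', h2'⟩ | ⟨h1', h2'⟩ <;>
    simp [Set.indicator, h1', h2', Real.norm_eq_abs]

lemma linf_not_separable : ¬ TopologicalSpace.SeparableSpace (lp (fun _ : ℕ => ℝ) ⊤) := by
  intro h
  obtain ⟨D, hDc, hDd⟩ := TopologicalSpace.exists_countable_dense (lp (fun _ : ℕ => ℝ) ⊤)
  have hdd : ∀ S : Set ℕ, ∃ d ∈ D, dist (ind S) d < 1/2 := fun S => by
    obtain ⟨d, hd1, hd2⟩ := hDd.exists_dist_lt (ind S) (show (0:ℝ) < 1/2 by norm_num)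
    exact ⟨d, hd1, hd2⟩
  choose d hdD hdlt using hdd
  have hinj : Function.Injective d := by
    intro S T hST
    by_contra hne
    have h1 := one_le_dist_ind hne
    have h4 : dist (ind S) (ind T) < 1 := by
      calc dist (ind S) (ind T) ≤ dist (ind S) (d S) + dist (d T) (ind T) := by
            rw [hST]; exact dist_triangle _ _ _
        _ < 1/2 + 1/2 := add_lt_add (hdlt S) (by rw [dist_comm]; exact hdlt T)
        _ = 1 := by norm_num
    linarith
  have hcD : Countable D := hDc.to_subtype
  have hinj2 : Function.Injective (fun S => (⟨d S, hdD S⟩ : D)) :=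
    fun S T h => hinj (congrArg Subtype.val h)
  have : Countable (Set ℕ) := hinj2.countable
  obtain ⟨f, hf⟩ := exists_injective_nat (Set ℕ)
  exact Function.cantor_injective f hf

end Wk

namespace Wk
lemma lp_secondCountable (q : ℝ≥0∞) [Fact (1 ≤ q)] (hq' : q ≠ ⊤) :
    SecondCountableTopology (lp (fun _ : ℕ => ℝ) q) := by
  have hsep : TopologicalSpace.SeparableSpace (lp (fun _ : ℕ => ℝ) q) := by
    rw [← TopologicalSpace.isSeparable_univ_iff]
    have hs := TopologicalSpace.IsSeparable.span (R := ℝ) (M := lp (fun _ : ℕ => ℝ) q)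
        ((Set.countable_range (fun i => lp.single q i (1:ℝ))).isSeparable)
    refine (hs.closure).mono fun f _ => ?_
    have hf := lp.hasSum_single hq' f
    refine mem_closure_of_tendsto hf (Filter.Eventually.of_forall fun s => ?_)
    refine Submodule.sum_mem _ fun i _ => ?_
    have heq : lp.single (E := fun _ : ℕ => ℝ) q i (f i) =
        (f i) • lp.single (E := fun _ : ℕ => ℝ) q i (1:ℝ) := by
      rw [← lp.single_smul, smul_eq_mul, mul_one]
    rw [heq]
    exact Submodule.smul_mem _ _ (Submodule.subset_span ⟨i, rfl⟩)
  exact UniformSpace.secondCountable_of_separable _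
end Wk

set_option linter.unusedSectionVars false
namespace Wk

abbrev Ep (p : ℝ≥0∞) := lp (fun _ : ℕ => ℝ) p

variable {p : ℝ≥0∞} [Fact (1 ≤ p)]

lemma p_ne_zero : p ≠ 0 := (zero_lt_one.trans_le (Fact.out : 1 ≤ p)).ne'

def coordCLM (p : ℝ≥0∞) [Fact (1 ≤ p)] (i : ℕ) : Ep p →L[ℝ] ℝ :=
  LinearMap.mkContinuous
    { toFun := fun f => f i
      map_add' := fun f g => by simp [lp.coeFn_add]
      map_smul' := fun c f => by simp [lp.coeFn_smul] }
    1 (fun f => by rw [one_mul]; exact lp.norm_apply_le_norm p_ne_zero f i)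

@[simp] lemma coordCLM_apply (i : ℕ) (f : Ep p) : coordCLM p i f = f i := rfl

/-- the coefficient sequence of a functional -/
def yseq (φ : Ep p →L[ℝ] ℝ) (i : ℕ) : ℝ := φ (lp.single p i 1)

lemma single_eq_smul (i : ℕ) (c : ℝ) :
    lp.single (E := fun _ : ℕ => ℝ) p i c = c • lp.single (E := fun _ : ℕ => ℝ) p i (1:ℝ) := by
  rw [← lp.single_smul, smul_eq_mul, mul_one]

lemma hasSum_repr (hp' : p ≠ ⊤) (φ : Ep p →L[ℝ] ℝ) (z : Ep p) :
    HasSum (fun i => z i * yseq φ i) (φ z) := by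
  have h := (lp.hasSum_single hp' z).mapL φ
  refine h.congr_fun fun i => ?_
  rw [single_eq_smul, map_smul, smul_eq_mul, yseq]

end Wk

namespace Wk
variable {p : ℝ≥0∞} [Fact (1 ≤ p)]

lemma sum_rpow_le {qr : ℝ} (hpq : p.toReal.HolderConjugate qr)
    (φ : Ep p →L[ℝ] ℝ) (s : Finset ℕ) :
    ∑ i ∈ s, |yseq φ i| ^ qr ≤ ‖φ‖ ^ qr := by
  have hpr : 0 < p.toReal := hpq.pos
  have hqr : 0 < qr := hpq.symm.pos
  have hqr1 : 1 < qr := hpq.symm.lt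
  set c : ℕ → ℝ := fun i => |yseq φ i| ^ (qr - 1) * Real.sign (yseq φ i) with hc
  set z : Ep p := ∑ i ∈ s, lp.single p i (c i) with hz
  set M : ℝ := ∑ i ∈ s, |yseq φ i| ^ qr with hM
  have hM0 : 0 ≤ M := Finset.sum_nonneg fun i _ => Real.rpow_nonneg (abs_nonneg _) _
  -- φ z = M
  have hφz : φ z = M := by
    rw [hz, map_sum]
    refine Finset.sum_congr rfl fun i _ => ?_
    rw [single_eq_smul, map_smul, smul_eq_mul]
    show c i * yseq φ i = _
    rw [hc]
    have hsgn : Real.sign (yseq φ i) * yseq φ i = |yseq φ i| := by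
      rcases lt_trichotomy (yseq φ i) 0 with h | h | h
      · rw [Real.sign_of_neg h, abs_of_neg h]; ring
      · simp [h]
      · rw [Real.sign_of_pos h, abs_of_pos h]; ring
    rw [mul_assoc, hsgn]
    rw [← Real.rpow_add_one' (abs_nonneg _) (by linarith)]
    ring_nf
  -- ‖z‖ ^ pr = M
  have hnz : ‖z‖ ^ p.toReal = M := by
    rw [hz]
    rw [lp.norm_sum_single (E := fun _ : ℕ => ℝ) hpr c s, hM]
    refine Finset.sum_congr rfl fun i _ => ?_
    have hcabs : ‖c i‖ = |yseq φ i| ^ (qr - 1) := by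
      rw [hc, Real.norm_eq_abs, abs_mul, abs_of_nonneg (Real.rpow_nonneg (abs_nonneg _) _)]
      rcases eq_or_ne (yseq φ i) 0 with h | h
      · simp [h, Real.zero_rpow (by linarith : qr - 1 ≠ 0)]
      · have : |Real.sign (yseq φ i)| = 1 := by
          rcases lt_trichotomy (yseq φ i) 0 with h' | h' | h'
          · rw [Real.sign_of_neg h']; simp
          · exact absurd h' h
          · rw [Real.sign_of_pos h']; simp
        rw [this, mul_one]
    rw [hcabs, ← Real.rpow_mul (abs_nonneg _), hpq.symm.sub_one_mul_conj]
  have hle : M ≤ ‖φ‖ * M ^ (p.toReal)⁻¹ := by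
    have h1 : φ z ≤ ‖φ‖ * ‖z‖ := le_trans (le_abs_self _) (φ.le_opNorm z)
    rw [hφz] at h1
    have h2 : ‖z‖ = M ^ (p.toReal)⁻¹ := by
      rw [← hnz, Real.rpow_rpow_inv (norm_nonneg _) hpr.ne']
    rwa [h2] at h1
  rcases eq_or_lt_of_le hM0 with h0 | h0
  · rw [← h0]; positivity
  · have key : M ^ (qr)⁻¹ ≤ ‖φ‖ := by
      have hne : 1 + -(p.toReal)⁻¹ ≠ 0 := by
        have hq2 := hpq.symm.inv_pos
        have := hpq.inv_add_inv_eq_one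
        exact ne_of_gt (by linarith)
      have hqinv : M ^ (qr)⁻¹ = M * (M ^ (p.toReal)⁻¹)⁻¹ := by
        rw [← Real.rpow_neg hM0, ← Real.rpow_one_add' (le_of_lt h0) hne]
        congr 1
        have := hpq.inv_add_inv_eq_one
        linarith
      have hdiv : M / M ^ (p.toReal)⁻¹ ≤ ‖φ‖ :=
        (div_le_iff₀ (Real.rpow_pos_of_pos h0 _)).mpr hle
      rw [hqinv, ← div_eq_mul_inv]
      exact hdiv
    calc M = (M ^ (qr)⁻¹) ^ qr := (Real.rpow_inv_rpow hM0 hqr.ne').symm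
      _ ≤ ‖φ‖ ^ qr := by gcongr

end Wk

namespace Wk
variable {p : ℝ≥0∞} [Fact (1 ≤ p)]

lemma tail_tendsto {q : ℝ≥0∞} [Fact (1 ≤ q)] (hq0 : 0 < q.toReal) (Y : lp (fun _ : ℕ => ℝ) q) :
    Tendsto (fun n => ‖Y - ∑ j ∈ Finset.range n, lp.single q j (Y j)‖) atTop (𝓝 0) := by
  have hpow : Tendsto
      (fun n => ‖Y - ∑ j ∈ Finset.range n, lp.single q j (Y j)‖ ^ q.toReal) atTop (𝓝 0) := by
    have h1 : ∀ n, ‖Y - ∑ j ∈ Finset.range n, lp.single q j (Y j)‖ ^ q.toReal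
        = ‖Y‖ ^ q.toReal - ∑ j ∈ Finset.range n, ‖Y j‖ ^ q.toReal := fun n =>
      lp.norm_compl_sum_single hq0 Y (Finset.range n)
    simp only [h1]
    have h2 := (lp.hasSum_norm hq0 Y).tendsto_sum_nat
    have h3 : Tendsto (fun n : ℕ => ‖Y‖ ^ q.toReal - ∑ j ∈ Finset.range n, ‖Y j‖ ^ q.toReal)
        atTop (𝓝 (‖Y‖ ^ q.toReal - ‖Y‖ ^ q.toReal)) := tendsto_const_nhds.sub h2
    simpa using h3
  have h4 := hpow.rpow_const (p := (q.toReal)⁻¹) (Or.inr (by positivity))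
  rw [Real.zero_rpow (by positivity)] at h4
  refine h4.congr fun n => ?_
  rw [Real.rpow_rpow_inv (norm_nonneg _) hq0.ne']

lemma tail_est {q : ℝ≥0∞} [Fact (1 ≤ q)] (hpq : p.toReal.HolderConjugate q.toReal)
    (hp' : p ≠ ⊤) (φ : Ep p →L[ℝ] ℝ) (Y : lp (fun _ : ℕ => ℝ) q) (hY : ∀ i, Y i = yseq φ i)
    (z : Ep p) (n : ℕ) :
    |φ z - ∑ i ∈ Finset.range n, z i * Y i|
      ≤ ‖z‖ * ‖Y - ∑ j ∈ Finset.range n, lp.single q j (Y j)‖ := by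
  set T : lp (fun _ : ℕ => ℝ) q := Y - ∑ j ∈ Finset.range n, lp.single q j (Y j) with hT
  have hcoe : ∀ i, (T : ∀ _ : ℕ, ℝ) i = Y i - (if i < n then Y i else 0) := by
    intro i
    simp only [hT, lp.coeFn_sub, Pi.sub_apply, lp.coeFn_sum, Finset.sum_apply,
      lp.single_apply, Finset.sum_dite_eq, Finset.mem_range, Pi.single_apply, Finset.sum_ite_eq]
  -- HasSum for the full series
  have hzY : HasSum (fun i => z i * Y i) (φ z) := by
    refine (hasSum_repr hp' φ z).congr_fun fun i => ?_
    rw [hY i]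
  -- HasSum for the finite part
  have hF : HasSum (fun i => z i * (if i < n then Y i else 0))
      (∑ i ∈ Finset.range n, z i * Y i) := by
    have h5 : ∀ i ∉ Finset.range n, z i * (if i < n then Y i else 0) = 0 := by
      intro i hi; rw [if_neg (fun h => hi (Finset.mem_range.mpr h)), mul_zero]
    have h6 : ∑ b ∈ Finset.range n, (z b * if b < n then Y b else 0)
        = ∑ i ∈ Finset.range n, z i * Y i :=
      Finset.sum_congr rfl fun i hi => by rw [if_pos (Finset.mem_range.mp hi)]
    exact h6 ▸ hasSum_sum_of_ne_finset_zero h5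
  have hTsum : HasSum (fun i => z i * T i) (φ z - ∑ i ∈ Finset.range n, z i * Y i) := by
    refine (hzY.sub hF).congr_fun fun i => ?_
    rw [hcoe i]; ring
  have hsummn : Summable (fun i => ‖z i * T i‖) := by
    refine (lp.summable_mul hpq z T).congr fun i => ?_
    rw [norm_mul]
  calc |φ z - ∑ i ∈ Finset.range n, z i * Y i| = ‖∑' i, z i * T i‖ := by
        rw [hTsum.tsum_eq, Real.norm_eq_abs]
    _ ≤ ∑' i, ‖z i * T i‖ := norm_tsum_le_tsum_norm hsummn
    _ ≤ ‖z‖ * ‖T‖ := by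
        refine le_trans (le_of_eq (tsum_congr fun i => norm_mul _ _)) ?_
        exact lp.tsum_mul_le_mul_norm' hpq z T
end Wk

namespace Wk
variable {p : ℝ≥0∞} [Fact (1 ≤ p)]

lemma pairing_flip_injective (E : Type*) [NormedAddCommGroup E] [NormedSpace ℝ E] :
    Function.Injective ⇑(topDualPairing ℝ E).flip := by
  intro a b h
  have h1 : ∀ φ : E →L[ℝ] ℝ, φ a = φ b := fun φ => LinearMap.congr_fun h φ
  have hz : ∀ φ : StrongDual ℝ E, φ (a - b) = 0 := fun φ => by
    rw [map_sub, h1 φ, sub_self]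
  exact sub_eq_zero.mp (SeparatingDual.eq_zero_of_forall_dual_eq_zero (R := ℝ) hz)

lemma isCompact_weak_ball (hp : 1 < p) (hp' : p ≠ ⊤) :
    IsCompact (toWeakSpace ℝ (Ep p) '' Metric.closedBall 0 1) := by
  have hp1 : 1 < p.toReal := by
    rw [show (1:ℝ) = (1:ℝ≥0∞).toReal by simp]
    exact (ENNReal.toReal_lt_toReal (by simp) hp').mpr hp
  have hpr : 0 < p.toReal := by linarith
  rw [isCompact_iff_ultrafilter_le_nhds]
  intro 𝒰 h𝒰
  set K : Set (WeakSpace ℝ (Ep p)) := toWeakSpace ℝ (Ep p) '' Metric.closedBall 0 1 with hKdef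
  have hK : K ∈ 𝒰 := le_principal_iff.mp h𝒰
  set ev : ℕ → WeakSpace ℝ (Ep p) → ℝ :=
    fun i z => ((toWeakSpace ℝ (Ep p)).symm z : ∀ _ : ℕ, ℝ) i with hev
  have hnorm_le : ∀ z ∈ K, ‖(toWeakSpace ℝ (Ep p)).symm z‖ ≤ 1 := by
    rintro z ⟨w, hw, rfl⟩
    rwa [LinearEquiv.symm_apply_apply, ← mem_closedBall_zero_iff]
  have hev_mem : ∀ i, ∀ z ∈ K, ev i z ∈ Set.Icc (-1:ℝ) 1 := by
    intro i z hz
    have h2 := lp.norm_apply_le_norm (p_ne_zero (p := p)) ((toWeakSpace ℝ (Ep p)).symm z) i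
    have h3 := le_trans h2 (hnorm_le z hz)
    rw [Real.norm_eq_abs, abs_le] at h3
    exact h3
  -- coordinatewise ultrafilter limits
  have hlim : ∀ i : ℕ, ∃ a : ℝ, a ∈ Set.Icc (-1:ℝ) 1 ∧ Tendsto (ev i) 𝒰 (𝓝 a) := by
    intro i
    obtain ⟨a, ha, hle⟩ := isCompact_Icc.ultrafilter_le_nhds (𝒰.map (ev i))
      (le_principal_iff.mpr (Ultrafilter.mem_map.mpr
        (Filter.mem_of_superset hK (fun z hz => hev_mem i z hz))))
    exact ⟨a, ha, hle⟩
  choose x hx1 hx2 using hlim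
  -- the limit is in the ball
  have hxs : ∀ s : Finset ℕ, ∑ i ∈ s, ‖x i‖ ^ p.toReal ≤ 1 := by
    intro s
    have htd : Tendsto (fun z => ∑ i ∈ s, ‖ev i z‖ ^ p.toReal) 𝒰
        (𝓝 (∑ i ∈ s, ‖x i‖ ^ p.toReal)) := by
      refine tendsto_finset_sum _ fun i _ => ?_
      exact ((hx2 i).norm.rpow_const (Or.inr hpr.le))
    refine le_of_tendsto htd (Filter.mem_of_superset hK fun z hz => ?_)
    have h4 : ∑ i ∈ s, ‖((toWeakSpace ℝ (Ep p)).symm z : ∀ _ : ℕ, ℝ) i‖ ^ p.toReal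
        ≤ ‖(toWeakSpace ℝ (Ep p)).symm z‖ ^ p.toReal :=
      lp.sum_rpow_le_norm_rpow hpr ((toWeakSpace ℝ (Ep p)).symm z) s
    refine le_trans h4 (Real.rpow_le_one (norm_nonneg _) (hnorm_le z hz) hpr.le)
  have hxmem : Memℓp x p := memℓp_gen' hxs
  set X : Ep p := ⟨x, hxmem⟩ with hX
  have hXcoord : ∀ i, (X : ∀ _ : ℕ, ℝ) i = x i := fun i => rfl
  have hX1 : ‖X‖ ≤ 1 := by
    have h5 : ‖X‖ ^ p.toReal ≤ 1 := by
      refine le_of_tendsto (lp.hasSum_norm hpr X).tendsto_sum_nat ?_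
      exact Filter.Eventually.of_forall fun n => hxs (Finset.range n)
    by_contra hc
    push_neg at hc
    have := Real.one_lt_rpow_iff_of_pos (by linarith : (0:ℝ) < ‖X‖) (y := p.toReal)
      |>.mpr (Or.inl ⟨hc, hpr⟩)
    linarith
  refine ⟨toWeakSpace ℝ (Ep p) X, ⟨X, mem_closedBall_zero_iff.mpr hX1, rfl⟩, ?_⟩
  -- weak convergence
  have hinj := pairing_flip_injective (Ep p)
  suffices hT : Tendsto (id : WeakSpace ℝ (Ep p) → WeakSpace ℝ (Ep p)) 𝒰
      (𝓝 (toWeakSpace ℝ (Ep p) X)) by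
    rwa [Tendsto, Filter.map_id] at hT
  refine (WeakBilin.tendsto_iff_forall_eval_tendsto (B := (topDualPairing ℝ (Ep p)).flip) (f := id) hinj).mpr ?_
  intro φ
  show Tendsto (fun z : WeakSpace ℝ (Ep p) => φ ((toWeakSpace ℝ (Ep p)).symm z)) 𝒰 (𝓝 (φ X))
  -- conjugate exponent setup
  set qr : ℝ := Real.conjExponent p.toReal with hqr
  have hpq : p.toReal.HolderConjugate qr := Real.HolderConjugate.conjExponent hp1
  have hqr0 : 0 < qr := hpq.symm.pos
  set q : ℝ≥0∞ := ENNReal.ofReal qr with hq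
  haveI : Fact (1 ≤ q) := ⟨by
    rw [hq, ← ENNReal.ofReal_one]
    exact ENNReal.ofReal_le_ofReal hpq.symm.lt.le⟩
  have hqtr : q.toReal = qr := ENNReal.toReal_ofReal hqr0.le
  have hpq' : p.toReal.HolderConjugate q.toReal := by rwa [hqtr]
  have hYmem : Memℓp (yseq φ) q := by
    refine memℓp_gen' (C := ‖φ‖ ^ qr) ?_
    intro s
    rw [hqtr]
    simpa only [Real.norm_eq_abs] using sum_rpow_le hpq φ s
  set Y : lp (fun _ : ℕ => ℝ) q := ⟨yseq φ, hYmem⟩ with hYdef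
  have hY : ∀ i, (Y : ∀ _ : ℕ, ℝ) i = yseq φ i := fun _ => rfl
  rw [Metric.tendsto_nhds]
  intro ε hε
  -- choose n with small tail
  have htail := tail_tendsto (q := q) (by rw [hqtr]; exact hqr0) Y
  have hev' : ∀ᶠ n in atTop,
      ‖Y - ∑ j ∈ Finset.range n, lp.single q j (Y j)‖ < ε / 3 :=
    htail.eventually (eventually_lt_nhds (by linarith : (0:ℝ) < ε/3) |>.mono fun t ht => ht)
  obtain ⟨n, hn⟩ := hev'.exists
  set T : lp (fun _ : ℕ => ℝ) q := Y - ∑ j ∈ Finset.range n, lp.single q j (Y j) with hTdef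
  have hSfin : Tendsto (fun z => ∑ i ∈ Finset.range n, ev i z * Y i) 𝒰
      (𝓝 (∑ i ∈ Finset.range n, x i * Y i)) :=
    tendsto_finset_sum _ fun i _ => (hx2 i).mul_const _
  have hXest : |φ X - ∑ i ∈ Finset.range n, x i * Y i| ≤ ‖T‖ := by
    have h8 := tail_est hpq' hp' φ Y hY X n
    exact le_trans h8 (mul_le_of_le_one_left (norm_nonneg _) hX1)
  have hzest : ∀ᶠ z in 𝒰,
      |φ ((toWeakSpace ℝ (Ep p)).symm z) - ∑ i ∈ Finset.range n, ev i z * Y i| ≤ ‖T‖ := by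
    refine Filter.eventually_of_mem hK fun z hz => ?_
    have h9 := tail_est hpq' hp' φ Y hY ((toWeakSpace ℝ (Ep p)).symm z) n
    exact le_trans h9 (mul_le_of_le_one_left (norm_nonneg _) (hnorm_le z hz))
  have hmid : ∀ᶠ z in 𝒰,
      |∑ i ∈ Finset.range n, ev i z * Y i - ∑ i ∈ Finset.range n, x i * Y i| < ε/3 := by
    rw [Metric.tendsto_nhds] at hSfin
    refine (hSfin (ε/3) (by linarith)).mono fun z hz => ?_
    rwa [Real.dist_eq] at hz
  filter_upwards [hzest, hmid] with z h1 h2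
  rw [Real.dist_eq]
  have htri : |φ ((toWeakSpace ℝ (Ep p)).symm z) - φ X|
      ≤ |φ ((toWeakSpace ℝ (Ep p)).symm z) - ∑ i ∈ Finset.range n, ev i z * Y i|
        + |∑ i ∈ Finset.range n, ev i z * Y i - ∑ i ∈ Finset.range n, x i * Y i|
        + |∑ i ∈ Finset.range n, x i * Y i - φ X| := by
    have t1 := abs_sub_le (φ ((toWeakSpace ℝ (Ep p)).symm z))
      (∑ i ∈ Finset.range n, ev i z * Y i) (φ X)
    have t2 := abs_sub_le (∑ i ∈ Finset.range n, ev i z * Y i)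
      (∑ i ∈ Finset.range n, x i * Y i) (φ X)
    linarith
  have hXest' : |∑ i ∈ Finset.range n, x i * Y i - φ X| ≤ ‖T‖ := by
    rwa [abs_sub_comm]
  linarith

end Wk

namespace Wk
open PPV
variable (p : ℝ≥0∞) [Fact (1 ≤ p)]

def Kset : Set (WeakSpace ℝ (Lp' p)) := toWeakSpace ℝ (Lp' p) '' Metric.closedBall 0 1

lemma mem_ball_of_K {κ : WeakSpace ℝ (Lp' p)} (h : κ ∈ Kset p) :
    (toWeakSpace ℝ (Lp' p)).symm κ ∈ Ball (Lp' p) := by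
  obtain ⟨w, hw, rfl⟩ := h
  rwa [LinearEquiv.symm_apply_apply]

noncomputable def ptOf (κ : ↥(Kset p)) : ↥(Ball (Lp' p)) :=
  ⟨(toWeakSpace ℝ (Lp' p)).symm κ.val, mem_ball_of_K p κ.2⟩

variable (q : ℝ≥0∞) [Fact (1 ≤ q)] (k : ℕ)

noncomputable def theta (f : ↥(polyWbSet k (Lp' p) (Lp' q))) : C(↥(Kset p), Lp' q) where
  toFun := fun κ => f.val (ptOf p κ)
  continuous_toFun := by
    obtain ⟨A, ⟨hAsymm, hArep⟩, hAw⟩ := f.2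
    have hco := hAw (Metric.closedBall 0 1) Metric.isBounded_closedBall
    have hres := hco.restrict
    refine hres.congr fun κ => ?_
    exact (hArep (ptOf p κ)).symm

lemma theta_apply (f : ↥(polyWbSet k (Lp' p) (Lp' q))) (κ : ↥(Kset p)) :
    theta p q k f κ = f.val (ptOf p κ) := rfl

end Wk

namespace Stmts
open PPV Wk Metric Filter Topology
open scoped ENNReal NNReal

theorem stmt19 (p q : ℝ≥0∞) [Fact (1 ≤ p)] [Fact (1 ≤ q)]
    (hp : 1 < p) (hp' : p ≠ ⊤) (hq : 1 < q) (hq' : q ≠ ⊤) (k : ℕ) (hk : 1 ≤ k) :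
    TopologicalSpace.SeparableSpace (polyWbSet k (Lp' p) (Lp' q)) ∧
      ¬ ContainsCopy Linf (polyWbSet k (Lp' p) (Lp' q)) := by
  classical
  -- compactness of the weak unit ball
  have hKcomp : IsCompact (Kset p) := isCompact_weak_ball hp hp'
  haveI : CompactSpace ↥(Kset p) := isCompact_iff_compactSpace.mp hKcomp
  -- embedding of K into ℕ → ℝ
  have hι : Continuous (fun κ : ↥(Kset p) =>
      (((toWeakSpace ℝ (Lp' p)).symm κ.val : Lp' p) : ∀ _ : ℕ, ℝ)) := by
    refine continuous_pi fun i => ?_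
    have hcoord : Continuous (fun z : WeakSpace ℝ (Lp' p) =>
        coordCLM p i ((toWeakSpace ℝ (Lp' p)).symm z)) :=
      WeakBilin.eval_continuous ((topDualPairing ℝ (Lp' p)).flip) (coordCLM p i)
    exact hcoord.comp continuous_subtype_val
  have hιinj : Function.Injective (fun κ : ↥(Kset p) =>
      (((toWeakSpace ℝ (Lp' p)).symm κ.val : Lp' p) : ∀ _ : ℕ, ℝ)) := by
    intro a b h
    apply Subtype.ext
    exact (toWeakSpace ℝ (Lp' p)).symm.injective (lp.ext h)
  haveI : T2Space ↥(Kset p) := (hι.isClosedEmbedding hιinj).toIsEmbedding.t2Space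
  haveI : SecondCountableTopology ↥(Kset p) :=
    (hι.isClosedEmbedding hιinj).toIsEmbedding.secondCountableTopology
  haveI : SecondCountableTopology (Lp' q) := lp_secondCountable q hq'
  haveI : SecondCountableTopology C(↥(Kset p), Lp' q) := inferInstance
  -- theta is an isometry
  have hsub : ∀ f g : ↥(polyWbSet k (Lp' p) (Lp' q)),
      theta p q k f - theta p q k g = theta p q k (f - g) := by
    intro f g
    refine ContinuousMap.ext fun κ => ?_
    show theta p q k f κ - theta p q k g κ = _
    rw [theta_apply, theta_apply, theta_apply]
    show f.val (ptOf p κ) - g.val (ptOf p κ) = ((f - g : _) : BoundedContinuousFunction _ _) (ptOf p κ)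
    rw [Submodule.coe_sub, BoundedContinuousFunction.sub_apply]
  have hnorm : ∀ f : ↥(polyWbSet k (Lp' p) (Lp' q)), ‖theta p q k f‖ = ‖f‖ := by
    intro f
    have hfval : ‖f‖ = ‖(f : BoundedContinuousFunction (Ball (Lp' p)) (Lp' q))‖ := rfl
    refine le_antisymm ?_ ?_
    · refine (ContinuousMap.norm_le _ (norm_nonneg f)).mpr fun κ => ?_
      rw [theta_apply]
      exact le_trans (BoundedContinuousFunction.norm_coe_le_norm f.val (ptOf p κ)) (le_of_eq hfval.symm)
    · rw [hfval]
      refine (BoundedContinuousFunction.norm_le (norm_nonneg _)).mpr fun y => ?_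
      have hyK : (toWeakSpace ℝ (Lp' p)) y.val ∈ Kset p := ⟨y.val, y.2, rfl⟩
      set κ : ↥(Kset p) := ⟨toWeakSpace ℝ (Lp' p) y.val, hyK⟩ with hκ
      have hpt : ptOf p κ = y := by
        apply Subtype.ext
        show (toWeakSpace ℝ (Lp' p)).symm ((toWeakSpace ℝ (Lp' p)) y.val) = y.val
        rw [LinearEquiv.symm_apply_apply]
      have := ContinuousMap.norm_coe_le_norm (theta p q k f) κ
      rwa [theta_apply, hpt] at this
  have hiso : Isometry (theta p q k) := Isometry.of_dist_eq fun f g => by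
    rw [dist_eq_norm, dist_eq_norm, hsub, hnorm]
  haveI : SecondCountableTopology ↥(polyWbSet k (Lp' p) (Lp' q)) :=
    hiso.isEmbedding.secondCountableTopology
  refine ⟨TopologicalSpace.SecondCountableTopology.to_separableSpace, ?_⟩
  rintro ⟨T, c, hc, hle⟩
  have hb : ∀ x : Linf, ‖x‖ ≤ ((⟨c, hc.le⟩ : ℝ≥0)⁻¹ : ℝ≥0) * ‖T x‖ := by
    intro x
    have h1 := hle x
    have e : (((⟨c, hc.le⟩ : ℝ≥0)⁻¹ : ℝ≥0) : ℝ) = c⁻¹ := NNReal.coe_inv _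
    rw [e]
    rw [inv_mul_eq_div, le_div_iff₀ (by exact_mod_cast hc)]
    rw [mul_comm]
    exact_mod_cast h1
  have hA := T.antilipschitz_of_bound hb
  haveI := (hA.isUniformEmbedding T.uniformContinuous).isEmbedding.secondCountableTopology
  exact linf_not_separable TopologicalSpace.SecondCountableTopology.to_separableSpace


end Stmts
end
end
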